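/- arXiv:1809.10608 — 5 statements merged into one kernel-verified Lean document; each statement's English description precedes it below -/
import Mathlib

section
/- Let f ∈ ℝ[x₁,…,xₙ] be a polynomial with support A = supp(f) ⊆ ℕⁿ, written f = Σ_{a∈A} c_a x^a with all c_a ≠ 0. If f is nonnegative on ℝⁿ, then (1) every vertex of the convex hull of A lies in (2ℕ)ⁿ (i.e., has all coordinates even), and (2) for every vertex a of the convex hull of A, the corresponding coefficient c_a is positive. -/
open MvPolynomial Finset Classical

namespace SONC

noncomputable section

/-- Embedding of lattice exponent vectors into `ℝⁿ`. -/
def toR {n : ℕ} (a : Fin n →₀ ℕ) : Fin n → ℝ := fun i => (a i : ℝ)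

/-- A lattice point is even if all its coordinates are even, i.e. it lies in `(2ℕ)ⁿ`. -/
def IsEvenPoint {n : ℕ} (a : Fin n →₀ ℕ) : Prop := ∀ i, Even (a i)

open Filter Real Topology in
/-- Key limit lemma: along the curve `x i = ε i * exp (t * w i)` with `w` a separating
functional, the dominant term is the vertex term, so its (signed) coefficient is nonneg. -/
lemma key_sign {n : ℕ} (f : MvPolynomial (Fin n) ℝ)
    (hf : ∀ x : Fin n → ℝ, 0 ≤ eval x f)
    (a : Fin n →₀ ℕ) (ha : a ∈ f.support)
    (ℓ : (Fin n → ℝ) →L[ℝ] ℝ)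
    (hsep : ∀ b ∈ f.support, b ≠ a → ℓ (toR b) < ℓ (toR a))
    (ε : Fin n → ℝ) (hε : ∀ i, ε i = 1 ∨ ε i = -1) :
    0 ≤ f.coeff a * ∏ i, ε i ^ (a i) := by
  classical
  set w : Fin n → ℝ := fun i => ℓ (Pi.single i 1) with hw
  have hlin : ∀ b : Fin n →₀ ℕ, ℓ (toR b) = ∑ i, (b i : ℝ) * w i := by
    intro b
    have hb : toR b = ∑ i : Fin n, (b i : ℝ) • (Pi.single i 1 : Fin n → ℝ) := by
      ext j
      simp [toR, Pi.single_apply, Finset.sum_apply]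
    rw [hb, map_sum]
    simp [hw, smul_eq_mul]
  -- the curve
  set x : ℝ → Fin n → ℝ := fun t i => ε i * Real.exp (t * w i) with hx
  have heval : ∀ t : ℝ, eval (x t) f
      = ∑ b ∈ f.support, f.coeff b * ((∏ i, ε i ^ (b i)) * Real.exp (t * ℓ (toR b))) := by
    intro t
    rw [eval_eq']
    refine Finset.sum_congr rfl fun b hb => ?_
    congr 1
    rw [hlin]
    rw [Finset.mul_sum, Real.exp_sum, ← Finset.prod_mul_distrib]
    refine Finset.prod_congr rfl fun i _ => ?_
    rw [hx, mul_pow, ← Real.exp_nat_mul]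
    ring_nf
  set F : ℝ → ℝ := fun t =>
    ∑ b ∈ f.support, f.coeff b * ((∏ i, ε i ^ (b i)) *
      Real.exp (t * (ℓ (toR b) - ℓ (toR a)))) with hF
  have hFnonneg : ∀ t : ℝ, 0 ≤ F t := by
    intro t
    have : F t = eval (x t) f * Real.exp (-(t * ℓ (toR a))) := by
      rw [heval, Finset.sum_mul]
      refine Finset.sum_congr rfl fun b hb => ?_
      rw [mul_assoc, mul_assoc, ← Real.exp_add]
      ring_nf
    rw [this]
    exact mul_nonneg (hf _) (Real.exp_pos _).le
  have hlim : Tendsto F atTop (𝓝 (f.coeff a * ∏ i, ε i ^ (a i))) := by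
    have := Finset.sum_eq_single (s := f.support)
      (f := fun b => if b = a then f.coeff a * ∏ i, ε i ^ (a i) else 0) a
      (fun b _ hb => if_neg hb) (fun h => absurd ha h)
    simp only [eq_self_iff_true, if_true] at this
    rw [← this]
    apply tendsto_finset_sum
    intro b hb
    by_cases hba : b = a
    · subst hba
      rw [if_pos rfl]
      have : (fun t : ℝ => f.coeff b * ((∏ i, ε i ^ (b i)) *
          Real.exp (t * (ℓ (toR b) - ℓ (toR b)))))
          = fun _ => f.coeff b * ∏ i, ε i ^ (b i) := by
        funext t; rw [sub_self, mul_zero, Real.exp_zero, mul_one]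
      rw [this]
      exact tendsto_const_nhds
    · rw [if_neg hba]
      have hneg : ℓ (toR b) - ℓ (toR a) < 0 := sub_neg.2 (hsep b hb hba)
      have h1 : Tendsto (fun t : ℝ => t * (ℓ (toR b) - ℓ (toR a))) atTop atBot :=
        Tendsto.atTop_mul_const_of_neg hneg tendsto_id
      have h2 : Tendsto (fun t : ℝ => Real.exp (t * (ℓ (toR b) - ℓ (toR a)))) atTop (𝓝 0) :=
        Real.tendsto_exp_atBot.comp h1
      have := (h2.const_mul (f.coeff b * ∏ i, ε i ^ (b i)))
      simpa [mul_assoc] using this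
  exact ge_of_tendsto' hlim hFnonneg

/-- If `f = ∑_{a ∈ A} c_a x^a` (with `A = supp f`) is nonnegative on `ℝⁿ`,
then every vertex (extreme point) `a` of the convex hull of `A` lies in `(2ℕ)ⁿ` and the
corresponding coefficient `c_a` is positive. -/
theorem nonneg_vertex_even_and_pos_coeff {n : ℕ} (f : MvPolynomial (Fin n) ℝ)
    (hf : ∀ x : Fin n → ℝ, 0 ≤ eval x f)
    (a : Fin n →₀ ℕ) (ha : a ∈ f.support)
    (hvert : toR a ∈ Set.extremePoints ℝ
      (convexHull ℝ (toR '' (f.support : Set (Fin n →₀ ℕ))))) :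
    IsEvenPoint a ∧ 0 < f.coeff a := by
  classical
  set S : Set (Fin n → ℝ) := toR '' (f.support : Set (Fin n →₀ ℕ)) with hS
  have hSfin : S.Finite := (f.support.finite_toSet).image _
  have hnot : toR a ∉ convexHull ℝ (S \ {toR a}) := by
    rw [(convex_convexHull ℝ S).mem_extremePoints_iff_mem_diff_convexHull_diff] at hvert
    intro h
    exact hvert.2 (convexHull_mono (Set.diff_subset_diff_left (subset_convexHull ℝ S)) h)
  obtain ⟨ℓ, u, hlt, hu⟩ := geometric_hahn_banach_closed_point
    (convex_convexHull ℝ _) ((hSfin.diff).isClosed_convexHull (𝕜 := ℝ)) hnot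
  have hsep : ∀ b ∈ f.support, b ≠ a → ℓ (toR b) < ℓ (toR a) := by
    intro b hb hba
    have hne : toR b ≠ toR a := by
      intro h
      apply hba
      ext i
      have := congrFun h i
      simp only [toR] at this
      exact_mod_cast this
    have hmem : toR b ∈ S \ {toR a} := ⟨⟨b, hb, rfl⟩, hne⟩
    exact (hlt _ (subset_convexHull ℝ _ hmem)).trans hu
  have hpos : 0 < f.coeff a := by
    have h1 := key_sign f hf a ha ℓ hsep (fun _ => 1) (fun _ => Or.inl rfl)
    simp only [one_pow, Finset.prod_const_one, mul_one] at h1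
    exact lt_of_le_of_ne h1 (Ne.symm (MvPolynomial.mem_support_iff.1 ha))
  refine ⟨fun j => ?_, hpos⟩
  by_contra hodd
  have hodd' : Odd (a j) := Nat.not_even_iff_odd.1 hodd
  set ε : Fin n → ℝ := fun i => if i = j then -1 else 1 with hε
  have h2 := key_sign f hf a ha ℓ hsep ε
    (fun i => by by_cases h : i = j <;> simp [hε, h])
  have hprod : (∏ i, ε i ^ (a i)) = (-1 : ℝ) ^ (a j) := by
    rw [hε]
    rw [Finset.prod_congr rfl (fun i _ => by
      show (if i = j then (-1:ℝ) else 1) ^ a i = if i = j then (-1:ℝ) ^ a i else 1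
      by_cases h : i = j <;> simp [h])]
    simp
  rw [hprod, hodd'.neg_one_pow] at h2
  linarith
end
end SONC
end

section
/- Let f = Σ_{a∈A} c_a x^a − d x^β ∈ ℝ[x₁,…,xₙ] be a circuit polynomial, where A ⊆ (2ℕ)ⁿ is a trellis, c_a > 0 for all a ∈ A, and β ∈ ℕⁿ lies in the interior of Conv(A), with barycentric coordinates β = Σ_{a∈A} λ_a a, λ_a > 0, Σ_{a∈A} λ_a = 1. Let Θ_f := Π_{a∈A} (c_a/λ_a)^{λ_a} be its circuit number. Then f is nonnegative on ℝⁿ if and only if: either β ∉ (2ℕ)ⁿ and |d| ≤ Θ_f, or β ∈ (2ℕ)ⁿ and d ≤ Θ_f. -/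
open MvPolynomial Finset Classical

namespace SONC

noncomputable section

/-- `β` lies in the interior of the simplex with vertex set `A`, with barycentric
coordinates `lam`: all `lam a > 0`, `∑ lam a = 1`, and `β = ∑ lam a • a`. -/
def IsInteriorPt {n : ℕ} (A : Finset (Fin n →₀ ℕ)) (lam : (Fin n →₀ ℕ) → ℝ)
    (β : Fin n →₀ ℕ) : Prop :=
  (∀ a ∈ A, 0 < lam a) ∧ ∑ a ∈ A, lam a = 1 ∧
    ∀ i, (β i : ℝ) = ∑ a ∈ A, lam a * (a i : ℝ)

/-- Key product identity: `∏_a (x^a)^{λ_a} = x^β` for nonnegative `x`. -/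
lemma prod_prod_rpow {n : ℕ} (A : Finset (Fin n →₀ ℕ)) (lam : (Fin n →₀ ℕ) → ℝ)
    (hlam0 : ∀ a ∈ A, 0 ≤ lam a) (β : Fin n →₀ ℕ)
    (hβ : ∀ i, (β i : ℝ) = ∑ a ∈ A, lam a * (a i : ℝ))
    (x : Fin n → ℝ) (hx : ∀ i, 0 ≤ x i) :
    ∏ a ∈ A, (∏ i, x i ^ (a i : ℕ)) ^ (lam a) = ∏ i, x i ^ (β i : ℕ) := by
  have h1 : ∀ a ∈ A, (∏ i, x i ^ (a i : ℕ)) ^ (lam a)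
      = ∏ i, x i ^ ((a i : ℝ) * lam a) := by
    intro a _
    rw [← Real.finset_prod_rpow _ _ (fun i _ => pow_nonneg (hx i) _)]
    refine Finset.prod_congr rfl fun i _ => ?_
    rw [← Real.rpow_natCast (x i) (a i), ← Real.rpow_mul (hx i)]
  rw [Finset.prod_congr rfl h1, Finset.prod_comm]
  refine Finset.prod_congr rfl fun i _ => ?_
  rw [← Real.rpow_sum_of_nonneg (hx i)
    (fun a ha => mul_nonneg (Nat.cast_nonneg _) (hlam0 a ha))]
  rw [← Real.rpow_natCast (x i) (β i)]
  congr 1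
  rw [hβ i]
  exact Finset.sum_congr rfl fun a _ => mul_comm _ _

/-- AM–GM bound for the positive part of a circuit polynomial. -/
lemma amgm_bound {n : ℕ} (A : Finset (Fin n →₀ ℕ)) (lam c : (Fin n →₀ ℕ) → ℝ)
    (hlam : ∀ a ∈ A, 0 < lam a) (hsum : ∑ a ∈ A, lam a = 1)
    (hc : ∀ a ∈ A, 0 < c a) (β : Fin n →₀ ℕ)
    (hβ : ∀ i, (β i : ℝ) = ∑ a ∈ A, lam a * (a i : ℝ))
    (x : Fin n → ℝ) (hx : ∀ i, 0 ≤ x i) :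
    (∏ a ∈ A, (c a / lam a) ^ (lam a)) * ∏ i, x i ^ (β i : ℕ)
      ≤ ∑ a ∈ A, c a * ∏ i, x i ^ (a i : ℕ) := by
  have key := Real.geom_mean_le_arith_mean_weighted A lam
    (fun a => (c a / lam a) * ∏ i, x i ^ (a i : ℕ))
    (fun a ha => (hlam a ha).le) hsum
    (fun a ha => mul_nonneg (div_nonneg (hc a ha).le (hlam a ha).le)
      (Finset.prod_nonneg fun i _ => pow_nonneg (hx i) _))
  have hL : ∏ a ∈ A, ((c a / lam a) * ∏ i, x i ^ (a i : ℕ)) ^ (lam a)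
      = (∏ a ∈ A, (c a / lam a) ^ (lam a)) * ∏ i, x i ^ (β i : ℕ) := by
    rw [← prod_prod_rpow A lam (fun a ha => (hlam a ha).le) β hβ x hx,
      ← Finset.prod_mul_distrib]
    refine Finset.prod_congr rfl fun a ha => ?_
    rw [Real.mul_rpow (div_nonneg (hc a ha).le (hlam a ha).le)
      (Finset.prod_nonneg fun i _ => pow_nonneg (hx i) _)]
  have hR : ∑ a ∈ A, lam a * ((c a / lam a) * ∏ i, x i ^ (a i : ℕ))
      = ∑ a ∈ A, c a * ∏ i, x i ^ (a i : ℕ) := by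
    refine Finset.sum_congr rfl fun a ha => ?_
    rw [← mul_assoc, mul_div_cancel₀ _ (hlam a ha).ne']
  rw [hL, hR] at key
  exact key

/-- Solvability of the interpolation system from affine independence. -/
lemma exists_st {n : ℕ} (A : Finset (Fin n →₀ ℕ))
    (hAff : AffineIndependent ℝ (fun a : A => toR (a : Fin n →₀ ℕ)))
    (v : (Fin n →₀ ℕ) → ℝ) :
    ∃ (s : Fin n → ℝ) (t : ℝ), ∀ a ∈ A, (∑ i, (a i : ℝ) * s i) + t = v a := by
  classical
  let L : (↥A → ℝ) →ₗ[ℝ] ((Fin n → ℝ) × ℝ) :=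
    { toFun := fun w => (∑ a : A, w a • toR (a : Fin n →₀ ℕ), ∑ a : A, w a)
      map_add' := by
        intro u w
        simp [add_smul, Finset.sum_add_distrib, Prod.mk_add_mk]
      map_smul' := by
        intro r w
        simp [smul_smul, Finset.smul_sum, Finset.mul_sum, Prod.smul_mk] }
  have hinj : Function.Injective L := by
    rw [← LinearMap.ker_eq_bot, LinearMap.ker_eq_bot']
    intro w hw
    have h1 : ∑ a : A, w a = 0 := congrArg Prod.snd hw
    have h2 : ∑ a : A, w a • toR (a : Fin n →₀ ℕ) = 0 := congrArg Prod.fst hw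
    have h3 := affineIndependent_iff.mp hAff Finset.univ w (by simpa using h1)
      (by simpa using h2)
    funext a
    exact h3 a (Finset.mem_univ a)
  let ψ : Module.Dual ℝ (↥A → ℝ) :=
    { toFun := fun w => ∑ a : A, v (a : Fin n →₀ ℕ) * w a
      map_add' := by intro u w; simp [mul_add, Finset.sum_add_distrib]
      map_smul' := by
        intro r w
        simp [Finset.mul_sum, mul_left_comm] }
  obtain ⟨φ, hφ⟩ := LinearMap.dualMap_surjective_of_injective hinj ψ
  have hval : ∀ a : A, φ (toR (a : Fin n →₀ ℕ), 1) = v (a : Fin n →₀ ℕ) := by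
    intro a
    have h1 : (L.dualMap φ) (Pi.single a 1) = ψ (Pi.single a 1) := by rw [hφ]
    have hL1 : L (Pi.single a 1) = (toR (a : Fin n →₀ ℕ), 1) := by
      simp [L, Pi.single_apply, ite_smul]
    have hψ1 : ψ (Pi.single a 1) = v (a : Fin n →₀ ℕ) := by
      simp [ψ, Pi.single_apply, mul_ite]
    have : φ (L (Pi.single a 1)) = ψ (Pi.single a 1) := h1
    rw [hL1, hψ1] at this
    exact this
  let g : (Fin n → ℝ) →ₗ[ℝ] ℝ := φ.comp (LinearMap.inl ℝ (Fin n → ℝ) ℝ)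
  refine ⟨fun i => g (fun j => if i = j then 1 else 0), φ (0, 1), ?_⟩
  intro a ha
  have hsplit : φ (toR a, 1) = g (toR a) + φ (0, 1) := by
    have : ((toR a : Fin n → ℝ), (1 : ℝ)) = ((toR a, 0) : (Fin n → ℝ) × ℝ) + (0, 1) := by
      simp
    rw [this, map_add]
    rfl
  have hg := LinearMap.pi_apply_eq_sum_univ g (toR a)
  have : (∑ i, (a i : ℝ) * g (fun j => if i = j then 1 else 0)) + φ (0, 1) = v a := by
    have := hval ⟨a, ha⟩
    simp only at this
    rw [hsplit, hg] at this
    simpa [toR, smul_eq_mul] using this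
  exact this

/-- Iliman–de Wolff. Let `f = ∑_{a ∈ A} c_a x^a - d x^β` be a circuit
polynomial: `A ⊆ (2ℕ)ⁿ` a trellis (vertex set of a simplex), `c_a > 0`, `β` an interior
point of `Conv(A)` with barycentric coordinates `lam`.  With circuit number
`Θ_f = ∏_{a ∈ A} (c_a / λ_a)^{λ_a}`, the polynomial `f` is nonnegative on `ℝⁿ` iff
either `β ∉ (2ℕ)ⁿ` and `|d| ≤ Θ_f`, or `β ∈ (2ℕ)ⁿ` and `d ≤ Θ_f`. -/
theorem circuit_nonneg_iff_circuit_number {n : ℕ}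
    (A : Finset (Fin n →₀ ℕ)) (hA : ∀ a ∈ A, IsEvenPoint a)
    (hAff : AffineIndependent ℝ (fun a : A => toR (a : Fin n →₀ ℕ)))
    (c : (Fin n →₀ ℕ) → ℝ) (hc : ∀ a ∈ A, 0 < c a)
    (d : ℝ) (β : Fin n →₀ ℕ) (hβA : β ∉ A)
    (lam : (Fin n →₀ ℕ) → ℝ) (hlam : IsInteriorPt A lam β)
    (f : MvPolynomial (Fin n) ℝ)
    (hf : f = (∑ a ∈ A, monomial a (c a)) - monomial β d) :
    (∀ x : Fin n → ℝ, 0 ≤ eval x f) ↔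
      ((¬ IsEvenPoint β ∧ |d| ≤ ∏ a ∈ A, (c a / lam a) ^ (lam a)) ∨
        (IsEvenPoint β ∧ d ≤ ∏ a ∈ A, (c a / lam a) ^ (lam a))) := by
  obtain ⟨hlam_pos, hlam_sum, hlam_β⟩ := hlam
  set Θ := ∏ a ∈ A, (c a / lam a) ^ (lam a) with hΘdef
  have hΘpos : 0 < Θ := Finset.prod_pos fun a ha =>
    Real.rpow_pos_of_pos (div_pos (hc a ha) (hlam_pos a ha)) _
  have heval : ∀ x : Fin n → ℝ, eval x f
      = (∑ a ∈ A, c a * ∏ i, x i ^ (a i : ℕ)) - d * ∏ i, x i ^ (β i : ℕ) := by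
    intro x
    rw [hf]
    simp [eval_monomial, Finsupp.prod_pow]
  constructor
  · -- necessity
    intro hnn
    obtain ⟨s, t, hst⟩ := exists_st A hAff (fun a => Real.log (lam a / c a))
    set y : Fin n → ℝ := fun i => Real.exp (s i) with hy
    have hypos : ∀ i, 0 < y i := fun i => Real.exp_pos _
    set K := Real.exp (-t) with hKdef
    have hKpos : 0 < K := Real.exp_pos _
    have hprod : ∀ a : Fin n →₀ ℕ,
        ∏ i, y i ^ (a i : ℕ) = Real.exp (∑ i, (a i : ℝ) * s i) := by
      intro a
      rw [Real.exp_sum]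
      refine Finset.prod_congr rfl fun i _ => ?_
      rw [← Real.exp_nat_mul]
    have hya : ∀ a ∈ A, c a * ∏ i, y i ^ (a i : ℕ) = lam a * K := by
      intro a ha
      rw [hprod a]
      have h1 : (∑ i, (a i : ℝ) * s i) = Real.log (lam a / c a) - t := by
        have := hst a ha; linarith
      rw [h1, Real.exp_sub, Real.exp_log (div_pos (hlam_pos a ha) (hc a ha)),
        hKdef, Real.exp_neg]
      field_simp
      rw [mul_div_assoc, mul_div_cancel₀ _ (hc a ha).ne']
    have hKsum : ∑ a ∈ A, c a * ∏ i, y i ^ (a i : ℕ) = K := by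
      rw [Finset.sum_congr rfl hya, ← Finset.sum_mul, hlam_sum, one_mul]
    have hyβpos : 0 < ∏ i, y i ^ (β i : ℕ) :=
      Finset.prod_pos fun i _ => pow_pos (hypos i) _
    have hKβ : Θ * ∏ i, y i ^ (β i : ℕ) = K := by
      have h1 : ∀ a ∈ A, c a / lam a = K / ∏ i, y i ^ (a i : ℕ) := by
        intro a ha
        have hapos : 0 < ∏ i, y i ^ (a i : ℕ) :=
          Finset.prod_pos fun i _ => pow_pos (hypos i) _
        rw [div_eq_div_iff (hlam_pos a ha).ne' hapos.ne', hya a ha]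
        ring
      have hθ2 : Θ = K / ∏ i, y i ^ (β i : ℕ) := by
        calc Θ = ∏ a ∈ A, (K / ∏ i, y i ^ (a i : ℕ)) ^ (lam a) :=
              Finset.prod_congr rfl (fun a ha => by rw [h1 a ha])
          _ = ∏ a ∈ A, (K ^ (lam a) / (∏ i, y i ^ (a i : ℕ)) ^ (lam a)) :=
              Finset.prod_congr rfl (fun a ha => Real.div_rpow hKpos.le
                (Finset.prod_nonneg fun i _ => pow_nonneg (hypos i).le _) _)
          _ = (∏ a ∈ A, K ^ (lam a)) / ∏ a ∈ A, (∏ i, y i ^ (a i : ℕ)) ^ (lam a) :=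
              Finset.prod_div_distrib _ _
          _ = K ^ ((1 : ℝ)) / ∏ i, y i ^ (β i : ℕ) := by
              rw [← Real.rpow_sum_of_pos hKpos lam A, hlam_sum,
                prod_prod_rpow A lam (fun a ha => (hlam_pos a ha).le) β hlam_β y
                  (fun i => (hypos i).le)]
          _ = K / ∏ i, y i ^ (β i : ℕ) := by rw [Real.rpow_one]
      rw [hθ2]
      field_simp
    have hd : d ≤ Θ := by
      have h0 := hnn y
      rw [heval y, hKsum, ← hKβ] at h0
      have h2 : d * ∏ i, y i ^ (β i : ℕ) ≤ Θ * ∏ i, y i ^ (β i : ℕ) := by linarith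
      exact le_of_mul_le_mul_right h2 hyβpos
    by_cases hev : IsEvenPoint β
    · exact Or.inr ⟨hev, hd⟩
    · refine Or.inl ⟨hev, abs_le.mpr ⟨?_, hd⟩⟩
      obtain ⟨i₀, hi₀⟩ : ∃ i, ¬ Even (β i) := by simpa [IsEvenPoint] using hev
      have hodd : Odd (β i₀) := Nat.not_even_iff_odd.mp hi₀
      set y' := Function.update y i₀ (-(y i₀)) with hy'
      have key : ∀ e : Fin n →₀ ℕ, ∏ i, y' i ^ (e i : ℕ)
          = (-(y i₀)) ^ (e i₀ : ℕ) * ∏ i ∈ Finset.univ.erase i₀, y i ^ (e i : ℕ) := by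
        intro e
        rw [← Finset.mul_prod_erase Finset.univ _ (Finset.mem_univ i₀)]
        congr 1
        · rw [hy', Function.update_self]
        · refine Finset.prod_congr rfl fun i hi => ?_
          rw [hy', Function.update_of_ne (Finset.ne_of_mem_erase hi)]
      have ha' : ∀ a ∈ A, ∏ i, y' i ^ (a i : ℕ) = ∏ i, y i ^ (a i : ℕ) := by
        intro a ha
        rw [key a, Even.neg_pow (hA a ha i₀),
          Finset.mul_prod_erase Finset.univ (fun i => y i ^ (a i : ℕ))
            (Finset.mem_univ i₀)]
      have hβ' : ∏ i, y' i ^ (β i : ℕ) = -∏ i, y i ^ (β i : ℕ) := by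
        rw [key β, hodd.neg_pow, neg_mul,
          Finset.mul_prod_erase Finset.univ (fun i => y i ^ (β i : ℕ))
            (Finset.mem_univ i₀)]
      have h0 := hnn y'
      have hsum2 : ∑ a ∈ A, c a * ∏ i, y' i ^ (a i : ℕ)
          = ∑ a ∈ A, c a * ∏ i, y i ^ (a i : ℕ) :=
        Finset.sum_congr rfl fun a ha => by rw [ha' a ha]
      rw [heval y', hsum2, hKsum, hβ', ← hKβ] at h0
      have h2 : (0 : ℝ) * ∏ i, y i ^ (β i : ℕ) ≤ (Θ + d) * ∏ i, y i ^ (β i : ℕ) := by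
        ring_nf
        ring_nf at h0
        linarith
      have h3 : (0 : ℝ) ≤ Θ + d := le_of_mul_le_mul_right h2 hyβpos
      linarith
  · -- sufficiency
    rintro (⟨hev, hd⟩ | ⟨hev, hd⟩) x <;> rw [heval x, sub_nonneg]
    all_goals {
      have hsum' : ∑ a ∈ A, c a * ∏ i, |x i| ^ (a i : ℕ)
          = ∑ a ∈ A, c a * ∏ i, x i ^ (a i : ℕ) := by
        refine Finset.sum_congr rfl fun a ha => ?_
        congr 1
        exact Finset.prod_congr rfl fun i _ => (hA a ha i).pow_abs (x i)
      have hAM := amgm_bound A lam c hlam_pos hlam_sum hc β hlam_β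
        (fun i => |x i|) (fun i => abs_nonneg _)
      rw [hsum'] at hAM
      have habs : ∏ i, |x i| ^ (β i : ℕ) = |∏ i, x i ^ (β i : ℕ)| := by
        rw [Finset.abs_prod]
        exact Finset.prod_congr rfl fun i _ => (abs_pow (x i) _).symm
      first
      | -- β not even case : |d| ≤ Θ
        calc d * ∏ i, x i ^ (β i : ℕ) ≤ |d * ∏ i, x i ^ (β i : ℕ)| := le_abs_self _
          _ = |d| * ∏ i, |x i| ^ (β i : ℕ) := by rw [abs_mul, habs]
          _ ≤ Θ * ∏ i, |x i| ^ (β i : ℕ) := by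
              exact mul_le_mul_of_nonneg_right hd
                (Finset.prod_nonneg fun i _ => pow_nonneg (abs_nonneg _) _)
          _ ≤ _ := hAM
      | -- β even case : d ≤ Θ
        ( have hβabs : ∏ i, x i ^ (β i : ℕ) = ∏ i, |x i| ^ (β i : ℕ) :=
            Finset.prod_congr rfl fun i _ => ((hev i).pow_abs (x i)).symm
          calc d * ∏ i, x i ^ (β i : ℕ) ≤ Θ * ∏ i, x i ^ (β i : ℕ) := by
                rw [hβabs]
                exact mul_le_mul_of_nonneg_right hd
                  (Finset.prod_nonneg fun i _ => pow_nonneg (abs_nonneg _) _)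
            _ ≤ _ := by rw [hβabs]; exact hAM )
    }


end
end SONC
end

section
/- Let f = Σ_{a∈Λ(f)} c_a x^a − d x^β ∈ ℝ[x₁,…,xₙ] with c_a > 0 for all a ∈ Λ(f), where Λ(f) ⊆ (2ℕ)ⁿ, d ≠ 0 (and d > 0 if β ∈ (2ℕ)ⁿ), and β lies in the interior of the Newton polytope Conv(Λ(f)). If f is nonnegative on ℝⁿ, then f is a sum of nonnegative circuit polynomials with the same support: f = Σ_{Δ∈Δ(β)} (Σ_{a∈V(Δ)} c_{Δ,a} x^a − d_Δ x^β), where each summand is a nonnegative circuit polynomial, Δ(β) is the set of simplices Δ with vertex set V(Δ) ⊆ Λ(f) and β ∈ Δ°. -/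
open MvPolynomial Finset Classical

namespace SONC

noncomputable section

/-- A polynomial is nonnegative if it takes nonnegative values on all of `ℝⁿ`. -/
def IsNonneg {n : ℕ} (f : MvPolynomial (Fin n) ℝ) : Prop :=
  ∀ x : Fin n → ℝ, 0 ≤ eval x f

/-- `g` is a circuit polynomial with simplex vertex set `A` and inner exponent `β`. -/
def IsCircuitOn {n : ℕ} (A : Finset (Fin n →₀ ℕ)) (β : Fin n →₀ ℕ)
    (g : MvPolynomial (Fin n) ℝ) : Prop :=
  AffineIndependent ℝ (fun a : A => toR (a : Fin n →₀ ℕ)) ∧ β ∉ A ∧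
  ∃ (c : (Fin n →₀ ℕ) → ℝ) (d : ℝ) (lam : (Fin n →₀ ℕ) → ℝ),
    (∀ a ∈ A, 0 < c a) ∧ IsInteriorPt A lam β ∧
    g = (∑ a ∈ A, monomial a (c a)) - monomial β d

/-- `Λ(f)`: the exponents in the support of `f` that are even and have positive coefficient. -/
def posSupp {n : ℕ} (f : MvPolynomial (Fin n) ℝ) : Finset (Fin n →₀ ℕ) :=
  f.support.filter fun a => IsEvenPoint a ∧ 0 < f.coeff a

/-- `Γ(f) := supp(f) \ Λ(f)`. -/
def negSupp {n : ℕ} (f : MvPolynomial (Fin n) ℝ) : Finset (Fin n →₀ ℕ) :=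
  f.support \ posSupp f

/-- `f` is a sum of nonnegative circuit polynomials with the same support:
`f = ∑ g_i` where each `g_i` is a nonnegative circuit polynomial whose simplex
vertex set is contained in `Λ(f)` and whose inner exponent lies in `Γ(f)`. -/
def SONCSameSupport {n : ℕ} (f : MvPolynomial (Fin n) ℝ) : Prop :=
  ∃ (m : ℕ) (g : Fin m → MvPolynomial (Fin n) ℝ)
    (A : Fin m → Finset (Fin n →₀ ℕ)) (β : Fin m → (Fin n →₀ ℕ)),
    f = ∑ i, g i ∧
    ∀ i, IsCircuitOn (A i) (β i) (g i) ∧ IsNonneg (g i) ∧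
      A i ⊆ posSupp f ∧ β i ∈ negSupp f

lemma continuous_eval {n : ℕ} (p : MvPolynomial (Fin n) ℝ) :
    Continuous fun x : Fin n → ℝ => eval x p := by
  have : (fun x : Fin n → ℝ => eval x p)
      = fun x => ∑ d ∈ p.support, p.coeff d * ∏ i ∈ d.support, x i ^ d i := by
    funext x; rw [eval_eq]
  rw [this]
  refine continuous_finset_sum _ fun d _ => Continuous.mul continuous_const ?_
  exact continuous_finset_prod _ fun i _ => (continuous_apply i).pow _

lemma nonneg_of_nonneg_on_nonzero {n : ℕ} (p : MvPolynomial (Fin n) ℝ)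
    (h : ∀ x : Fin n → ℝ, (∀ i, x i ≠ 0) → 0 ≤ eval x p) : IsNonneg p := by
  intro x
  set xk : ℕ → (Fin n → ℝ) := fun k i => if x i = 0 then 1 / (k + 1 : ℝ) else x i with hxk
  have hmem : ∀ k, ∀ i, xk k i ≠ 0 := by
    intro k i; by_cases hxi : x i = 0 <;> simp [hxk, hxi]
    positivity
  have htend : Filter.Tendsto xk Filter.atTop (nhds x) := by
    rw [tendsto_pi_nhds]
    intro i
    by_cases hxi : x i = 0
    · simp only [hxk, hxi, if_true]
      exact tendsto_one_div_add_atTop_nhds_zero_nat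
    · simp [hxk, hxi, tendsto_const_nhds]
  have := ((continuous_eval p).tendsto x).comp htend
  exact ge_of_tendsto this (Filter.Eventually.of_forall fun k => h (xk k) (hmem k))

lemma exp_sum_le {α : Type*} (s : Finset α) (w t : α → ℝ) (h0 : ∀ a ∈ s, 0 ≤ w a)
    (h1 : ∑ a ∈ s, w a = 1) :
    Real.exp (∑ a ∈ s, w a * t a) ≤ ∑ a ∈ s, w a * Real.exp (t a) := by
  have := convexOn_exp.map_sum_le (t := s) (w := w) (p := t) h0 h1 (fun _ _ => Set.mem_univ _)
  simpa using this

lemma circuit_nonneg {n : ℕ} (B : Finset (Fin n →₀ ℕ)) (hB : ∀ a ∈ B, IsEvenPoint a)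
    (β : Fin n →₀ ℕ) (v : (Fin n →₀ ℕ) → ℝ) (hv : ∀ a ∈ B, 0 < v a)
    (hv1 : ∑ a ∈ B, v a = 1)
    (hmom : ∀ i, (β i : ℝ) = ∑ a ∈ B, v a * (a i : ℝ))
    (K D : ℝ) (θ : (Fin n →₀ ℕ) → ℝ)
    (hθ : ∑ a ∈ B, v a * θ a = 0)
    (hD : |D| ≤ K) :
    IsNonneg ((∑ a ∈ B, monomial a (v a * (K * Real.exp (θ a)))) - monomial β D) := by
  apply nonneg_of_nonneg_on_nonzero
  intro x hx
  set z : Fin n → ℝ := fun i => Real.log |x i| with hz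
  have hxz : ∀ i, |x i| = Real.exp (z i) := fun i => (Real.exp_log (abs_pos.2 (hx i))).symm
  set E : (Fin n →₀ ℕ) → ℝ := fun a => Real.exp (∑ i, (a i : ℝ) * z i) with hE
  have habs : ∀ a : Fin n →₀ ℕ, ∏ i, |x i| ^ a i = E a := by
    intro a
    rw [hE]; dsimp only
    rw [Real.exp_sum]
    refine Finset.prod_congr rfl fun i _ => ?_
    rw [Real.exp_nat_mul, ← hxz i]
  have heven : ∀ a ∈ B, ∏ i, x i ^ a i = E a := by
    intro a ha
    rw [← habs a]
    exact Finset.prod_congr rfl fun i _ => (Even.pow_abs (hB a ha i) _).symm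
  have hevalS : eval x ((∑ a ∈ B, monomial a (v a * (K * Real.exp (θ a)))) - monomial β D)
      = (∑ a ∈ B, v a * (K * Real.exp (θ a)) * ∏ i, x i ^ a i) - D * ∏ i, x i ^ β i := by
    rw [map_sub, map_sum]
    simp only [eval_monomial, Finsupp.prod_pow]
  rw [hevalS, sub_nonneg]
  have hKnn : 0 ≤ K := le_trans (abs_nonneg D) hD
  have h1 : D * ∏ i, x i ^ β i ≤ K * E β := by
    calc D * ∏ i, x i ^ β i ≤ |D * ∏ i, x i ^ β i| := le_abs_self _
      _ = |D| * ∏ i, |x i| ^ β i := by rw [abs_mul, Finset.abs_prod]; simp [abs_pow]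
      _ = |D| * E β := by rw [habs]
      _ ≤ K * E β := mul_le_mul_of_nonneg_right hD (le_of_lt (Real.exp_pos _))
  refine le_trans h1 ?_
  have h2 : ∑ a ∈ B, v a * (θ a + ∑ i, (a i : ℝ) * z i) = ∑ i, (β i : ℝ) * z i := by
    simp only [mul_add, Finset.sum_add_distrib, hθ, zero_add, Finset.mul_sum]
    rw [Finset.sum_comm]
    refine Finset.sum_congr rfl fun i _ => ?_
    rw [hmom i, Finset.sum_mul]
    exact Finset.sum_congr rfl fun a _ => by ring
  calc K * E β = K * Real.exp (∑ a ∈ B, v a * (θ a + ∑ i, (a i : ℝ) * z i)) := by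
        rw [h2]
    _ ≤ K * ∑ a ∈ B, v a * Real.exp (θ a + ∑ i, (a i : ℝ) * z i) :=
        mul_le_mul_of_nonneg_left (exp_sum_le B v _ (fun a ha => (hv a ha).le) hv1) hKnn
    _ = ∑ a ∈ B, v a * (K * Real.exp (θ a)) * E a := by
        rw [Finset.mul_sum]
        refine Finset.sum_congr rfl fun a _ => ?_
        rw [Real.exp_add]; simp only [hE]; ring
    _ = ∑ a ∈ B, v a * (K * Real.exp (θ a)) * ∏ i, x i ^ a i :=
        Finset.sum_congr rfl fun a ha => by rw [heven a ha]


lemma abs_d_le {n : ℕ} (A : Finset (Fin n →₀ ℕ)) (hA : ∀ a ∈ A, IsEvenPoint a)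
    (c : (Fin n →₀ ℕ) → ℝ) (d : ℝ) (β : Fin n →₀ ℕ)
    (hdpos : IsEvenPoint β → 0 < d) (hd : d ≠ 0)
    (f : MvPolynomial (Fin n) ℝ)
    (hf : f = (∑ a ∈ A, monomial a (c a)) - monomial β d)
    (hnn : IsNonneg f) (z : Fin n → ℝ) :
    |d| ≤ ∑ a ∈ A, c a * Real.exp (∑ j, ((a j : ℝ) - (β j : ℝ)) * z j) := by
  obtain ⟨s, hs, hsβ⟩ : ∃ s : Fin n → ℝ, (∀ i, s i = 1 ∨ s i = -1) ∧
      (∏ i, s i ^ β i) * d = |d| := by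
    rcases lt_or_gt_of_ne hd with hneg | hpos
    · have hβodd : ¬ IsEvenPoint β := fun h => absurd (hdpos h) (not_lt.2 hneg.le)
      obtain ⟨i₀, hi₀⟩ := not_forall.1 hβodd
      refine ⟨fun i => if i = i₀ then -1 else 1,
        fun i => by by_cases h : i = i₀ <;> simp [h], ?_⟩
      have h1 : ∀ i, (if i = i₀ then (-1:ℝ) else 1) ^ β i
          = if i = i₀ then (-1:ℝ) ^ β i else 1 := by
        intro i; by_cases h : i = i₀ <;> simp [h]
      have h2 : (∏ i, (if i = i₀ then (-1:ℝ) else 1) ^ β i) = -1 := by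
        rw [Finset.prod_congr rfl (fun i _ => h1 i),
          Finset.prod_ite_eq' Finset.univ i₀ (fun i => (-1:ℝ) ^ β i)]
        simp [Odd.neg_one_pow (Nat.not_even_iff_odd.1 hi₀)]
      rw [h2, abs_of_neg hneg]; ring
    · exact ⟨fun _ => 1, fun _ => Or.inl rfl, by simp [abs_of_pos hpos]⟩
  set x : Fin n → ℝ := fun i => s i * Real.exp (z i) with hx
  have hprod : ∀ a : Fin n →₀ ℕ, ∏ i, x i ^ a i
      = (∏ i, s i ^ a i) * Real.exp (∑ i, (a i : ℝ) * z i) := by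
    intro a
    rw [Real.exp_sum, ← Finset.prod_mul_distrib]
    refine Finset.prod_congr rfl fun i _ => ?_
    rw [hx]; dsimp only
    rw [mul_pow, Real.exp_nat_mul]
  have hsev : ∀ a : Fin n →₀ ℕ, IsEvenPoint a → ∏ i, s i ^ a i = 1 := by
    intro a ha
    refine Finset.prod_eq_one fun i _ => ?_
    rcases hs i with h | h
    · rw [h, one_pow]
    · rw [h, Even.neg_one_pow (ha i)]
  have h0 := hnn x
  rw [hf, map_sub, map_sum] at h0
  simp only [eval_monomial, Finsupp.prod_pow] at h0
  rw [sub_nonneg] at h0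
  have hβx : d * ∏ i, x i ^ β i = |d| * Real.exp (∑ i, (β i : ℝ) * z i) := by
    rw [hprod, ← hsβ]; ring
  have hAx : ∀ a ∈ A, c a * ∏ i, x i ^ a i = c a * Real.exp (∑ i, (a i : ℝ) * z i) :=
    fun a ha => by rw [hprod, hsev a (hA a ha), one_mul]
  have h0' : |d| * Real.exp (∑ i, (β i : ℝ) * z i)
      ≤ ∑ a ∈ A, c a * Real.exp (∑ i, (a i : ℝ) * z i) := by
    rw [← hβx]
    exact le_trans h0 (le_of_eq (Finset.sum_congr rfl hAx))
  have hEβ : (0:ℝ) < Real.exp (∑ i, (β i : ℝ) * z i) := Real.exp_pos _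
  have hsplit : ∀ a : Fin n →₀ ℕ, Real.exp (∑ j, ((a j : ℝ) - (β j : ℝ)) * z j)
      = Real.exp (∑ j, (a j : ℝ) * z j) / Real.exp (∑ j, (β j : ℝ) * z j) := by
    intro a; rw [← Real.exp_sub]; congr 1
    rw [← Finset.sum_sub_distrib]
    exact Finset.sum_congr rfl fun j _ => by ring
  calc |d| = |d| * Real.exp (∑ i, (β i : ℝ) * z i) / Real.exp (∑ i, (β i : ℝ) * z i) := by
        field_simp
    _ ≤ (∑ a ∈ A, c a * Real.exp (∑ i, (a i : ℝ) * z i))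
          / Real.exp (∑ i, (β i : ℝ) * z i) := by
        exact div_le_div_of_nonneg_right h0' hEβ.le
    _ = ∑ a ∈ A, c a * Real.exp (∑ j, ((a j : ℝ) - (β j : ℝ)) * z j) := by
        rw [Finset.sum_div]
        exact Finset.sum_congr rfl fun a _ => by rw [hsplit a]; ring


lemma exists_critical {n : ℕ} (A : Finset (Fin n →₀ ℕ)) (c : (Fin n →₀ ℕ) → ℝ)
    (hc : ∀ a ∈ A, 0 < c a) (β : Fin n →₀ ℕ)
    (hβ : toR β ∈ interior (convexHull ℝ (toR '' (A : Set (Fin n →₀ ℕ))))) :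
    ∃ z₀ : Fin n → ℝ, ∀ i,
      ∑ a ∈ A, (c a * Real.exp (∑ j, ((a j : ℝ) - (β j : ℝ)) * z₀ j)) * ((a i : ℝ) - (β i : ℝ)) = 0 := by
  classical
  -- A is nonempty
  have hAne : A.Nonempty := by
    rcases A.eq_empty_or_nonempty with h | h
    · exfalso
      rw [h] at hβ
      simp only [Finset.coe_empty, Set.image_empty, convexHull_empty, interior_empty] at hβ
      exact hβ
    · exact h
  set F : (Fin n → ℝ) → ℝ :=
    fun z => ∑ a ∈ A, c a * Real.exp (∑ j, ((a j : ℝ) - (β j : ℝ)) * z j) with hF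
  have hFcont : Continuous F := by
    refine continuous_finset_sum _ fun a _ => Continuous.mul continuous_const ?_
    exact Real.continuous_exp.comp (continuous_finset_sum _ fun j _ =>
      Continuous.mul continuous_const (continuous_apply j))
  obtain ⟨ε, hε, hball⟩ : ∃ ε > 0,
      Metric.ball (toR β) ε ⊆ convexHull ℝ (toR '' (A : Set (Fin n →₀ ℕ))) := by
    rcases Metric.mem_nhds_iff.1 (mem_interior_iff_mem_nhds.1 hβ) with ⟨ε, hε, h⟩
    exact ⟨ε, hε, h⟩
  -- minimum of c on A
  obtain ⟨a₀, ha₀A, ha₀min⟩ := A.exists_min_image c hAne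
  have hcm : 0 < c a₀ := hc a₀ ha₀A
  -- key coercivity bound
  have hkey : ∀ z : Fin n → ℝ, ∃ a ∈ A, ε / 2 * ‖z‖ ≤ ∑ j, ((a j : ℝ) - (β j : ℝ)) * z j := by
    intro z
    by_cases hz : z = 0
    · exact ⟨a₀, ha₀A, by simp [hz]⟩
    · have hzn : (0:ℝ) < ‖z‖ := norm_pos_iff.2 hz
      set y : Fin n → ℝ := toR β + (ε / 2 / ‖z‖) • z with hy
      have hymem : y ∈ convexHull ℝ (toR '' (A : Set (Fin n →₀ ℕ))) := by
        apply hball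
        rw [Metric.mem_ball, dist_eq_norm]
        have : y - toR β = (ε / 2 / ‖z‖) • z := by rw [hy]; abel
        rw [this, norm_smul]
        rw [Real.norm_eq_abs, abs_of_pos (by positivity)]
        rw [div_mul_cancel₀ _ (ne_of_gt hzn)]
        linarith
      -- write y as convex combination
      rw [show toR '' (A : Set (Fin n →₀ ℕ)) = ((A.image toR : Finset (Fin n → ℝ)) : Set (Fin n → ℝ)) by rw [Finset.coe_image], Finset.convexHull_eq] at hymem
      obtain ⟨w, hw0, hw1, hwy⟩ := hymem
      -- linear functional
      set L : (Fin n → ℝ) → ℝ := fun u => ∑ j, u j * z j with hL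
      have hLy : L (toR β) + ε / 2 * ‖z‖ ≤ L y := by
        have hsq : ‖z‖ ^ 2 ≤ ∑ j, z j * z j := by
          have h1 : ‖z‖ ≤ Real.sqrt (∑ j, z j * z j) := by
            rw [pi_norm_le_iff_of_nonneg (Real.sqrt_nonneg _)]
            intro i
            rw [Real.norm_eq_abs, ← Real.sqrt_mul_self (abs_nonneg (z i))]
            apply Real.sqrt_le_sqrt
            rw [abs_mul_abs_self]
            exact Finset.single_le_sum (f := fun j => z j * z j)
              (fun j _ => mul_self_nonneg (z j)) (Finset.mem_univ i)
          calc ‖z‖ ^ 2 ≤ Real.sqrt (∑ j, z j * z j) ^ 2 := by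
                apply pow_le_pow_left₀ (norm_nonneg z) h1
            _ = ∑ j, z j * z j := Real.sq_sqrt (Finset.sum_nonneg fun j _ => mul_self_nonneg _)
        have hyL : L y = L (toR β) + (ε / 2 / ‖z‖) * ∑ j, z j * z j := by
          simp only [hL, hy, Pi.add_apply, Pi.smul_apply, smul_eq_mul]
          rw [Finset.mul_sum, ← Finset.sum_add_distrib]
          exact Finset.sum_congr rfl fun j _ => by ring
        have h2 : ε / 2 * ‖z‖ ≤ (ε / 2 / ‖z‖) * ∑ j, z j * z j := by
          calc ε / 2 * ‖z‖ = ε / 2 / ‖z‖ * ‖z‖ ^ 2 := by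
                field_simp
            _ ≤ ε / 2 / ‖z‖ * ∑ j, z j * z j :=
                mul_le_mul_of_nonneg_left hsq (by positivity)
        rw [hyL]; linarith
      -- y is the convex combination
      have hysum : y = ∑ p ∈ A.image toR, w p • p := by
        rw [← hwy, Finset.centerMass_eq_of_sum_1 _ _ hw1]
        simp
      have hLlin : L y = ∑ p ∈ A.image toR, w p * L p := by
        rw [hysum, hL]
        simp only [Finset.sum_apply, Pi.smul_apply, smul_eq_mul, Finset.sum_mul,
          Finset.mul_sum]
        rw [Finset.sum_comm]
        exact Finset.sum_congr rfl fun p _ => Finset.sum_congr rfl fun j _ => by ring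
      have hmax : ∃ p ∈ A.image toR, L y ≤ L p := by
        by_contra hcon
        push_neg at hcon
        obtain ⟨p₀, hp₀, hwp₀⟩ := Finset.exists_ne_zero_of_sum_ne_zero
          (hw1 ▸ one_ne_zero : ∑ p ∈ A.image toR, w p ≠ 0)
        have hlt : ∑ p ∈ A.image toR, w p * L p < ∑ p ∈ A.image toR, w p * L y := by
          refine Finset.sum_lt_sum (fun p hp =>
            mul_le_mul_of_nonneg_left (hcon p hp).le (hw0 p hp)) ⟨p₀, hp₀, ?_⟩
          exact mul_lt_mul_of_pos_left (hcon p₀ hp₀) (lt_of_le_of_ne (hw0 p₀ hp₀) (Ne.symm hwp₀))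
        rw [← hLlin, ← Finset.sum_mul, hw1, one_mul] at hlt
        exact lt_irrefl _ hlt
      obtain ⟨p, hpmem, hLp⟩ := hmax
      obtain ⟨a, haA, rfl⟩ := Finset.mem_image.1 hpmem
      refine ⟨a, haA, ?_⟩
      have hdiff : L (toR a) - L (toR β) = ∑ j, ((a j : ℝ) - (β j : ℝ)) * z j := by
        simp only [hL, toR]
        rw [← Finset.sum_sub_distrib]
        exact Finset.sum_congr rfl fun j _ => by ring
      linarith
  -- coercivity and minimum
  have hlow : ∀ z : Fin n → ℝ, c a₀ * Real.exp (ε / 2 * ‖z‖) ≤ F z := by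
    intro z
    obtain ⟨a, haA, hge⟩ := hkey z
    calc c a₀ * Real.exp (ε / 2 * ‖z‖)
        ≤ c a * Real.exp (∑ j, ((a j : ℝ) - (β j : ℝ)) * z j) :=
          mul_le_mul (ha₀min a haA) (Real.exp_le_exp.2 hge) (Real.exp_pos _).le (hc a haA).le
      _ ≤ F z := Finset.single_le_sum
          (f := fun a => c a * Real.exp (∑ j, ((a j : ℝ) - (β j : ℝ)) * z j))
          (fun a' ha' => mul_nonneg (hc a' ha').le (Real.exp_pos _).le) haA
  have htend : Filter.Tendsto F (Filter.cocompact (Fin n → ℝ)) Filter.atTop := by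
    refine Filter.tendsto_atTop_mono hlow ?_
    have h1 : Filter.Tendsto (fun z : Fin n → ℝ => ‖z‖)
        (Filter.cocompact (Fin n → ℝ)) Filter.atTop := tendsto_norm_cocompact_atTop
    have h2 := h1.const_mul_atTop (show (0:ℝ) < ε / 2 by positivity)
    have h3 := Real.tendsto_exp_atTop.comp h2
    exact h3.const_mul_atTop hcm
  obtain ⟨z₀, hz₀⟩ := hFcont.exists_forall_le htend
  refine ⟨z₀, fun i => ?_⟩
  set φ : ℝ → ℝ := fun t => ∑ a ∈ A, c a * Real.exp
    ((∑ j, ((a j : ℝ) - (β j : ℝ)) * z₀ j) + ((a i : ℝ) - (β i : ℝ)) * t) with hφ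
  have hφF : ∀ t, φ t = F (Function.update z₀ i (z₀ i + t)) := by
    intro t
    simp only [hφ, hF]
    refine Finset.sum_congr rfl fun a _ => ?_
    congr 2
    have hupd : ∀ j, ((a j : ℝ) - (β j : ℝ)) * (Function.update z₀ i (z₀ i + t)) j
        = ((a j : ℝ) - (β j : ℝ)) * z₀ j
          + (if j = i then ((a i : ℝ) - (β i : ℝ)) * t else 0) := by
      intro j; by_cases h : j = i
      · subst h; rw [Function.update_self]; simp; ring
      · rw [Function.update_of_ne h]; simp [h]
    rw [Finset.sum_congr rfl fun j _ => hupd j, Finset.sum_add_distrib,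
      Finset.sum_ite_eq' Finset.univ i]
    simp
  have hmin : IsLocalMin φ 0 := by
    refine Filter.Eventually.of_forall fun t => ?_
    rw [hφF, hφF]
    have : Function.update z₀ i (z₀ i + 0) = z₀ := by
      rw [add_zero, Function.update_eq_self]
    rw [this]
    exact hz₀ _
  have hder : HasDerivAt φ
      (∑ a ∈ A, (c a * Real.exp (∑ j, ((a j : ℝ) - (β j : ℝ)) * z₀ j))
        * ((a i : ℝ) - (β i : ℝ))) 0 := by
    rw [hφ]
    apply HasDerivAt.fun_sum
    intro a _
    have h1 : HasDerivAt (fun t : ℝ =>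
        (∑ j, ((a j : ℝ) - (β j : ℝ)) * z₀ j) + ((a i : ℝ) - (β i : ℝ)) * t)
        ((a i : ℝ) - (β i : ℝ)) 0 := by
      simpa using ((hasDerivAt_id (0:ℝ)).const_mul ((a i : ℝ) - (β i : ℝ))).const_add
        (∑ j, ((a j : ℝ) - (β j : ℝ)) * z₀ j)
    have h2 := h1.exp.const_mul (c a)
    have h3 : (∑ j, ((a j : ℝ) - (β j : ℝ)) * z₀ j) + ((a i : ℝ) - (β i : ℝ)) * 0
        = ∑ j, ((a j : ℝ) - (β j : ℝ)) * z₀ j := by ring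
    rw [h3] at h2
    convert h2 using 1
    · rfl
    ring
  have hd0 := hmin.deriv_eq_zero
  rw [hder.deriv] at hd0
  exact hd0

lemma aff_congr {n : ℕ} {S T : Finset (Fin n →₀ ℕ)} (h : S = T)
    (ha : AffineIndependent ℝ (fun a : T => toR (a : Fin n →₀ ℕ))) :
    AffineIndependent ℝ (fun a : S => toR (a : Fin n →₀ ℕ)) := by
  subst h; exact ha

lemma split {n : ℕ} (β : Fin n →₀ ℕ) :
    ∀ (N : ℕ) (B : Finset (Fin n →₀ ℕ)), B.card ≤ N →
    ∀ lam : (Fin n →₀ ℕ) → ℝ,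
      (∀ a ∈ B, 0 < lam a) → (∑ a ∈ B, lam a = 1) →
      (∀ i, ∑ a ∈ B, lam a * (a i : ℝ) = (β i : ℝ)) →
      ∃ (k : ℕ) (μ : Fin k → ℝ) (v : Fin k → (Fin n →₀ ℕ) → ℝ)
        (Bs : Fin k → Finset (Fin n →₀ ℕ)),
        (∀ j, 0 < μ j) ∧ (∀ j, Bs j ⊆ B) ∧
        (∀ j, ∀ a ∈ Bs j, 0 < v j a) ∧ (∀ j a, a ∉ Bs j → v j a = 0) ∧
        (∀ j, ∑ a ∈ Bs j, v j a = 1) ∧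
        (∀ j i, ∑ a ∈ Bs j, v j a * (a i : ℝ) = (β i : ℝ)) ∧
        (∀ j, AffineIndependent ℝ (fun a : (Bs j) => toR (a : Fin n →₀ ℕ))) ∧
        (∀ a ∈ B, lam a = ∑ j, μ j * v j a) := by
  intro N
  induction N with
  | zero =>
    intro B hcard lam _ hsum _
    exact absurd hsum (by simp [Finset.card_eq_zero.1 (Nat.le_zero.1 hcard)])
  | succ N ih =>
    intro B hcard lam hpos hsum hmom
    by_cases hai : AffineIndependent ℝ (fun a : B => toR (a : Fin n →₀ ℕ))
    · refine ⟨1, fun _ => 1, fun _ a => if a ∈ B then lam a else 0, fun _ => B,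
        fun _ => one_pos, fun _ => Finset.Subset.refl B, ?_, ?_, ?_, ?_, fun _ => hai, ?_⟩
      · intro _ a ha; dsimp only; rw [if_pos ha]; exact hpos a ha
      · intro _ a ha; dsimp only; rw [if_neg ha]
      · intro _
        dsimp only
        rw [Finset.sum_congr rfl fun a ha => if_pos ha]
        exact hsum
      · intro _ i
        dsimp only
        have hcg : ∀ a ∈ B, (if a ∈ B then lam a else 0) * ((a i : ℕ) : ℝ)
            = lam a * ((a i : ℕ) : ℝ) := fun a ha => by rw [if_pos ha]
        rw [Finset.sum_congr rfl hcg]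
        exact hmom i
      · intro a ha
        simp [Fin.sum_univ_one, if_pos ha]
    · rw [affineIndependent_iff_of_fintype] at hai
      push_neg at hai
      obtain ⟨w, hw0, hwv, i₁, hwi⟩ := hai
      rw [Finset.weightedVSub_eq_linear_combination _ hw0] at hwv
      set τ : (Fin n →₀ ℕ) → ℝ := fun a => if h : a ∈ B then w ⟨a, h⟩ else 0 with hτ
      have hτval : ∀ x : B, τ (x : Fin n →₀ ℕ) = w x := fun x => dif_pos x.2
      have hτB : ∑ a ∈ B, τ a = 0 := by
        rw [← Finset.sum_coe_sort B τ]
        rw [Finset.sum_congr rfl fun x _ => hτval x]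
        exact hw0
      have hτmom : ∀ i, ∑ a ∈ B, τ a * ((a : Fin n →₀ ℕ) i : ℝ) = 0 := by
        intro i
        have h := congrFun hwv i
        simp only [Finset.sum_apply, Pi.smul_apply, smul_eq_mul, Pi.zero_apply] at h
        rw [← Finset.sum_coe_sort B (fun a => τ a * ((a : Fin n →₀ ℕ) i : ℝ))]
        rw [Finset.sum_congr rfl fun x _ => by rw [hτval x]]
        exact h
      have hτne : τ (i₁ : Fin n →₀ ℕ) ≠ 0 := by rw [hτval i₁]; exact hwi
      have hPne : (B.filter fun a => 0 < τ a).Nonempty := by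
        by_contra hcon
        rw [Finset.not_nonempty_iff_eq_empty] at hcon
        have hle : ∀ a ∈ B, τ a ≤ 0 := by
          intro a ha; by_contra hgt; push_neg at hgt
          have : a ∈ B.filter fun a => 0 < τ a := Finset.mem_filter.2 ⟨ha, hgt⟩
          rw [hcon] at this; exact absurd this (Finset.notMem_empty a)
        have h1 : τ (i₁ : Fin n →₀ ℕ) < 0 := lt_of_le_of_ne (hle _ i₁.2) hτne
        have h2 : ∑ a ∈ B, τ a < ∑ a ∈ B, (0:ℝ) :=
          Finset.sum_lt_sum hle ⟨(i₁ : Fin n →₀ ℕ), i₁.2, by simpa using h1⟩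
        rw [hτB] at h2; simp at h2
      have hNne : (B.filter fun a => τ a < 0).Nonempty := by
        by_contra hcon
        rw [Finset.not_nonempty_iff_eq_empty] at hcon
        have hle : ∀ a ∈ B, 0 ≤ τ a := by
          intro a ha; by_contra hgt; push_neg at hgt
          have : a ∈ B.filter fun a => τ a < 0 := Finset.mem_filter.2 ⟨ha, hgt⟩
          rw [hcon] at this; exact absurd this (Finset.notMem_empty a)
        have h1 : 0 < τ (i₁ : Fin n →₀ ℕ) := lt_of_le_of_ne (hle _ i₁.2) (Ne.symm hτne)
        have h2 : ∑ a ∈ B, (0:ℝ) < ∑ a ∈ B, τ a :=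
          Finset.sum_lt_sum hle ⟨(i₁ : Fin n →₀ ℕ), i₁.2, by simpa using h1⟩
        rw [hτB] at h2; simp at h2
      obtain ⟨p, hpP, hpmin⟩ := (B.filter fun a => 0 < τ a).exists_min_image
        (fun a => lam a / τ a) hPne
      obtain ⟨q, hqN, hqmin⟩ := (B.filter fun a => τ a < 0).exists_min_image
        (fun a => lam a / (-τ a)) hNne
      have hpB : p ∈ B := (Finset.mem_filter.1 hpP).1
      have hpτ : 0 < τ p := (Finset.mem_filter.1 hpP).2
      have hqB : q ∈ B := (Finset.mem_filter.1 hqN).1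
      have hqτ : τ q < 0 := (Finset.mem_filter.1 hqN).2
      set t1 := lam p / τ p with ht1
      set t2 := lam q / (-τ q) with ht2
      have ht1p : 0 < t1 := div_pos (hpos p hpB) hpτ
      have ht2p : 0 < t2 := div_pos (hpos q hqB) (neg_pos.2 hqτ)
      set lam1 : (Fin n →₀ ℕ) → ℝ := fun a => lam a - t1 * τ a with hlam1
      set lam2 : (Fin n →₀ ℕ) → ℝ := fun a => lam a + t2 * τ a with hlam2
      have hlam1nn : ∀ a ∈ B, 0 ≤ lam1 a := by
        intro a ha
        rcases le_or_gt (τ a) 0 with h | h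
        · simp only [hlam1]; nlinarith [hpos a ha]
        · have hmin := hpmin a (Finset.mem_filter.2 ⟨ha, h⟩)
          simp only [hlam1]
          have := (le_div_iff₀ h).1 hmin
          linarith
      have hlam2nn : ∀ a ∈ B, 0 ≤ lam2 a := by
        intro a ha
        rcases le_or_gt 0 (τ a) with h | h
        · simp only [hlam2]; nlinarith [hpos a ha]
        · have hmin := hqmin a (Finset.mem_filter.2 ⟨ha, h⟩)
          simp only [hlam2]
          have := (le_div_iff₀ (neg_pos.2 h)).1 hmin
          linarith
      have hlam1p : lam1 p = 0 := by
        simp only [hlam1, ht1]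
        field_simp
        ring
      have hlam2q : lam2 q = 0 := by
        have hne : τ q ≠ 0 := ne_of_lt hqτ
        simp only [hlam2, ht2]
        field_simp
        ring
      have key : ∀ (lam' : (Fin n →₀ ℕ) → ℝ), (∀ a ∈ B, 0 ≤ lam' a) →
          (∃ b ∈ B, lam' b = 0) → (∑ a ∈ B, lam' a = 1) →
          (∀ i, ∑ a ∈ B, lam' a * (a i : ℝ) = (β i : ℝ)) →
          ∃ (k : ℕ) (μ : Fin k → ℝ) (v : Fin k → (Fin n →₀ ℕ) → ℝ)
            (Bs : Fin k → Finset (Fin n →₀ ℕ)),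
            (∀ j, 0 < μ j) ∧ (∀ j, Bs j ⊆ B) ∧
            (∀ j, ∀ a ∈ Bs j, 0 < v j a) ∧ (∀ j a, a ∉ Bs j → v j a = 0) ∧
            (∀ j, ∑ a ∈ Bs j, v j a = 1) ∧
            (∀ j i, ∑ a ∈ Bs j, v j a * (a i : ℝ) = (β i : ℝ)) ∧
            (∀ j, AffineIndependent ℝ (fun a : (Bs j) => toR (a : Fin n →₀ ℕ))) ∧
            (∀ a ∈ B, lam' a = ∑ j, μ j * v j a) := by
        intro lam' hnn ⟨b, hbB, hb0⟩ hsum' hmom'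
        set B1 := B.filter (fun a => lam' a ≠ 0) with hB1
        have hB1sub : B1 ⊆ B := Finset.filter_subset _ _
        have hzero : ∀ a ∈ B, a ∉ B1 → lam' a = 0 := by
          intro a ha h
          by_contra hne; exact h (Finset.mem_filter.2 ⟨ha, hne⟩)
        have hB1card : B1.card ≤ N := by
          have hbnot : b ∉ B1 := fun hmem => (Finset.mem_filter.1 hmem).2 hb0
          have hss : B1 ⊂ B := ⟨hB1sub, fun hsub => hbnot (hsub hbB)⟩
          exact Nat.lt_succ_iff.1 (lt_of_lt_of_le (Finset.card_lt_card hss) hcard)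
        have h1pos : ∀ a ∈ B1, 0 < lam' a := fun a ha =>
          lt_of_le_of_ne (hnn a (hB1sub ha)) (Ne.symm (Finset.mem_filter.1 ha).2)
        have h1sum : ∑ a ∈ B1, lam' a = 1 := by
          rw [Finset.sum_subset hB1sub (fun a ha h => hzero a ha h)]
          exact hsum'
        have h1mom : ∀ i, ∑ a ∈ B1, lam' a * (a i : ℝ) = (β i : ℝ) := by
          intro i
          rw [Finset.sum_subset hB1sub (fun a ha h => by rw [hzero a ha h, zero_mul])]
          exact hmom' i
        obtain ⟨k1, μ1, v1, Bs1, hμ1, hBs1, hv1p, hv1z, hv1s, hv1m, hv1a, hv1r⟩ :=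
          ih B1 hB1card lam' h1pos h1sum h1mom
        refine ⟨k1, μ1, v1, Bs1, hμ1, fun j => (hBs1 j).trans hB1sub,
          hv1p, hv1z, hv1s, hv1m, hv1a, ?_⟩
        intro a ha
        by_cases h : a ∈ B1
        · exact hv1r a h
        · rw [hzero a ha h]
          rw [Finset.sum_eq_zero fun j _ => by
            rw [hv1z j a (fun hm => h (hBs1 j hm)), mul_zero]]
      have h1sum : ∑ a ∈ B, lam1 a = 1 := by
        simp only [hlam1]
        rw [Finset.sum_sub_distrib, hsum, ← Finset.mul_sum, hτB, mul_zero, sub_zero]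
      have h1mom : ∀ i, ∑ a ∈ B, lam1 a * (a i : ℝ) = (β i : ℝ) := by
        intro i
        simp only [hlam1, sub_mul]
        rw [Finset.sum_sub_distrib, hmom i]
        rw [show ∑ a ∈ B, t1 * τ a * (a i : ℝ) = t1 * ∑ a ∈ B, τ a * (a i : ℝ) by
          rw [Finset.mul_sum]; exact Finset.sum_congr rfl fun _ _ => by ring]
        rw [hτmom i, mul_zero, sub_zero]
      have h2sum : ∑ a ∈ B, lam2 a = 1 := by
        simp only [hlam2]
        rw [Finset.sum_add_distrib, hsum, ← Finset.mul_sum, hτB, mul_zero, add_zero]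
      have h2mom : ∀ i, ∑ a ∈ B, lam2 a * (a i : ℝ) = (β i : ℝ) := by
        intro i
        simp only [hlam2, add_mul]
        rw [Finset.sum_add_distrib, hmom i]
        rw [show ∑ a ∈ B, t2 * τ a * (a i : ℝ) = t2 * ∑ a ∈ B, τ a * (a i : ℝ) by
          rw [Finset.mul_sum]; exact Finset.sum_congr rfl fun _ _ => by ring]
        rw [hτmom i, mul_zero, add_zero]
      obtain ⟨k1, μ1, v1, Bs1, hμ1, hBs1, hv1p, hv1z, hv1s, hv1m, hv1a, hv1r⟩ :=
        key lam1 hlam1nn ⟨p, hpB, hlam1p⟩ h1sum h1mom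
      obtain ⟨k2, μ2, v2, Bs2, hμ2, hBs2, hv2p, hv2z, hv2s, hv2m, hv2a, hv2r⟩ :=
        key lam2 hlam2nn ⟨q, hqB, hlam2q⟩ h2sum h2mom
      have hts : 0 < t1 + t2 := by linarith
      set r := t2 / (t1 + t2) with hr
      set sR := t1 / (t1 + t2) with hsR
      have hrp : 0 < r := div_pos ht2p hts
      have hsp : 0 < sR := div_pos ht1p hts
      have hcomb : ∀ a, lam a = r * lam1 a + sR * lam2 a := by
        intro a
        simp only [hlam1, hlam2, hr, hsR]
        field_simp
        ring
      refine ⟨k1 + k2, Fin.addCases (fun j => r * μ1 j) (fun j => sR * μ2 j),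
        Fin.addCases v1 v2, Fin.addCases Bs1 Bs2, ?_, ?_, ?_, ?_, ?_, ?_, ?_, ?_⟩
      · refine Fin.addCases (fun j => ?_) (fun j => ?_)
        · simpa using mul_pos hrp (hμ1 j)
        · simpa using mul_pos hsp (hμ2 j)
      · refine Fin.addCases (fun j => ?_) (fun j => ?_)
        · simpa using hBs1 j
        · simpa using hBs2 j
      · refine Fin.addCases (fun j => ?_) (fun j => ?_)
        · simpa using hv1p j
        · simpa using hv2p j
      · refine Fin.addCases (fun j => ?_) (fun j => ?_)
        · simpa using hv1z j
        · simpa using hv2z j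
      · refine Fin.addCases (fun j => ?_) (fun j => ?_)
        · simpa using hv1s j
        · simpa using hv2s j
      · refine Fin.addCases (fun j => ?_) (fun j => ?_)
        · simpa using hv1m j
        · simpa using hv2m j
      · refine Fin.addCases (fun j => ?_) (fun j => ?_)
        · exact aff_congr (by simp) (hv1a j)
        · exact aff_congr (by simp) (hv2a j)
      · intro a ha
        rw [hcomb a, Fin.sum_univ_add]
        simp only [Fin.addCases_left, Fin.addCases_right]
        have hterm1 : r * lam1 a = ∑ j : Fin k1, r * μ1 j * v1 j a := by
          by_cases h : a ∈ B
          · rw [hv1r a h, Finset.mul_sum]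
            exact Finset.sum_congr rfl fun j _ => by ring
          · exact absurd ha h
        have hterm2 : sR * lam2 a = ∑ j : Fin k2, sR * μ2 j * v2 j a := by
          rw [hv2r a ha, Finset.mul_sum]
          exact Finset.sum_congr rfl fun j _ => by ring
        rw [hterm1, hterm2]


/-- Wang. Let `f = ∑_{a ∈ Λ(f)} c_a x^a - d x^β` with `Λ(f) = A ⊆ (2ℕ)ⁿ`,
all `c_a > 0`, `d ≠ 0` (and `d > 0` if `β` is even), and `β` an interior point of the Newton
polytope `Conv(Λ(f))`.  If `f` is nonnegative on `ℝⁿ`, then `f` is a sum of nonnegative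
circuit polynomials with the same support. -/

theorem nonneg_one_negative_term_SONCSameSupport {n : ℕ}
    (A : Finset (Fin n →₀ ℕ)) (hA : ∀ a ∈ A, IsEvenPoint a)
    (c : (Fin n →₀ ℕ) → ℝ) (hc : ∀ a ∈ A, 0 < c a)
    (d : ℝ) (hd : d ≠ 0) (β : Fin n →₀ ℕ) (hβA : β ∉ A)
    (hdpos : IsEvenPoint β → 0 < d)
    (hβ : toR β ∈ interior (convexHull ℝ (toR '' (A : Set (Fin n →₀ ℕ)))))
    (f : MvPolynomial (Fin n) ℝ)
    (hf : f = (∑ a ∈ A, monomial a (c a)) - monomial β d)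
    (hnn : IsNonneg f) :
    SONCSameSupport f := by
  classical
  obtain ⟨z₀, hz₀⟩ := exists_critical A c hc β hβ
  set w : (Fin n →₀ ℕ) → ℝ :=
    fun a => c a * Real.exp (∑ j, ((a j : ℝ) - (β j : ℝ)) * z₀ j) with hw
  set W : ℝ := ∑ a ∈ A, w a with hW
  have hdW : |d| ≤ W := abs_d_le A hA c d β hdpos hd f hf hnn z₀
  have hWpos : 0 < W := lt_of_lt_of_le (abs_pos.2 hd) hdW
  have hwpos : ∀ a ∈ A, 0 < w a := fun a ha => mul_pos (hc a ha) (Real.exp_pos _)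
  set lam : (Fin n →₀ ℕ) → ℝ := fun a => w a / W with hlam
  have hlampos : ∀ a ∈ A, 0 < lam a := fun a ha => div_pos (hwpos a ha) hWpos
  have hlamsum : ∑ a ∈ A, lam a = 1 := by
    simp only [hlam]
    rw [← Finset.sum_div, ← hW, div_self (ne_of_gt hWpos)]
  have hlammom : ∀ i, ∑ a ∈ A, lam a * (a i : ℝ) = (β i : ℝ) := by
    intro i
    have h := hz₀ i
    have h3 : ∑ a ∈ A, (w a * (a i : ℝ) - w a * (β i : ℝ)) = 0 := by
      rw [← h]
      exact Finset.sum_congr rfl fun a _ => by simp only [hw]; ring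
    rw [Finset.sum_sub_distrib] at h3
    have h4 : ∑ a ∈ A, w a * (β i : ℝ) = (β i : ℝ) * W := by
      rw [← Finset.sum_mul, ← hW]; ring
    have h2 : ∑ a ∈ A, w a * (a i : ℝ) = (β i : ℝ) * W := by linarith
    simp only [hlam]
    rw [show ∑ a ∈ A, w a / W * (a i : ℝ) = (∑ a ∈ A, w a * (a i : ℝ)) / W by
      rw [Finset.sum_div]; exact Finset.sum_congr rfl fun a _ => by ring]
    rw [h2]
    field_simp
  obtain ⟨k, μ, v, Bs, hμ, hBs, hvp, hvz, hvs, hvm, hva, hvr⟩ :=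
    split β A.card A le_rfl lam hlampos hlamsum hlammom
  have hvsA : ∀ j, ∑ a ∈ A, v j a = 1 := by
    intro j
    rw [← Finset.sum_subset (hBs j) (fun a _ h => hvz j a h)]
    exact hvs j
  have hμsum : ∑ j, μ j = 1 := by
    calc ∑ j, μ j = ∑ j, ∑ a ∈ A, μ j * v j a := by
          refine Finset.sum_congr rfl fun j _ => ?_
          rw [← Finset.mul_sum, hvsA j, mul_one]
      _ = ∑ a ∈ A, ∑ j, μ j * v j a := Finset.sum_comm
      _ = ∑ a ∈ A, lam a := Finset.sum_congr rfl fun a ha => (hvr a ha).symm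
      _ = 1 := hlamsum
  set θ : (Fin n →₀ ℕ) → ℝ := fun a => ∑ j, ((β j : ℝ) - (a j : ℝ)) * z₀ j with hθdef
  set g : Fin k → MvPolynomial (Fin n) ℝ := fun j =>
    (∑ a ∈ Bs j, monomial a (v j a * ((μ j * W) * Real.exp (θ a)))) - monomial β (μ j * d)
    with hg
  have hcoeff : ∀ b, f.coeff b = (if b ∈ A then c b else 0) - (if β = b then d else 0) := by
    intro b
    rw [hf, MvPolynomial.coeff_sub]
    congr 1
    · rw [MvPolynomial.coeff_sum]
      simp only [MvPolynomial.coeff_monomial]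
      exact Finset.sum_ite_eq' A b c
    · rw [MvPolynomial.coeff_monomial]
  have hposSupp : posSupp f = A := by
    ext b
    simp only [posSupp, Finset.mem_filter, MvPolynomial.mem_support_iff]
    constructor
    · rintro ⟨hne, heven, hpos⟩
      by_contra hbA
      by_cases hbβ : β = b
      · have hde : 0 < d := hdpos (hbβ ▸ heven)
        rw [hcoeff b, if_neg hbA, if_pos hbβ] at hpos
        simp at hpos
        linarith
      · rw [hcoeff b, if_neg hbA, if_neg hbβ] at hne
        simp at hne
    · intro hbA
      have hbβ : β ≠ b := fun h => hβA (h ▸ hbA)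
      refine ⟨?_, hA b hbA, ?_⟩
      · rw [hcoeff b, if_pos hbA, if_neg hbβ, sub_zero]
        exact ne_of_gt (hc b hbA)
      · rw [hcoeff b, if_pos hbA, if_neg hbβ, sub_zero]
        exact hc b hbA
  have hβnegSupp : β ∈ negSupp f := by
    rw [negSupp, Finset.mem_sdiff, hposSupp]
    refine ⟨?_, hβA⟩
    rw [MvPolynomial.mem_support_iff, hcoeff β, if_neg hβA, if_pos rfl]
    simpa using hd
  refine ⟨k, g, Bs, fun _ => β, ?_, ?_⟩
  · -- f = ∑ g j
    rw [hf]
    have hgj : ∀ j, g j = (∑ a ∈ A, monomial a (v j a * ((μ j * W) * Real.exp (θ a))))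
        - monomial β (μ j * d) := by
      intro j
      simp only [hg]
      congr 1
      refine Finset.sum_subset (hBs j) fun a _ h => ?_
      rw [hvz j a h, zero_mul, map_zero]
    rw [Finset.sum_congr rfl fun j _ => hgj j, Finset.sum_sub_distrib]
    congr 1
    · rw [Finset.sum_comm]
      refine Finset.sum_congr rfl fun a ha => ?_
      rw [← map_sum]
      congr 1
      have hsum : ∑ j, v j a * ((μ j * W) * Real.exp (θ a))
          = (∑ j, μ j * v j a) * (W * Real.exp (θ a)) := by
        rw [Finset.sum_mul]
        exact Finset.sum_congr rfl fun j _ => by ring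
      rw [hsum, ← hvr a ha]
      simp only [hlam, hw, hθdef]
      have hexp : Real.exp (∑ j, ((a j : ℝ) - (β j : ℝ)) * z₀ j)
          * Real.exp (∑ j, ((β j : ℝ) - (a j : ℝ)) * z₀ j) = 1 := by
        rw [← Real.exp_add,
          show (∑ j, ((a j : ℝ) - (β j : ℝ)) * z₀ j)
            + (∑ j, ((β j : ℝ) - (a j : ℝ)) * z₀ j) = 0 by
            rw [← Finset.sum_add_distrib]
            exact Finset.sum_eq_zero fun j _ => by ring,
          Real.exp_zero]
      have hne : W ≠ 0 := ne_of_gt hWpos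
      symm
      calc c a * Real.exp (∑ j, ((a j : ℝ) - (β j : ℝ)) * z₀ j) / W
            * (W * Real.exp (∑ j, ((β j : ℝ) - (a j : ℝ)) * z₀ j))
          = c a * (Real.exp (∑ j, ((a j : ℝ) - (β j : ℝ)) * z₀ j)
              * Real.exp (∑ j, ((β j : ℝ) - (a j : ℝ)) * z₀ j)) * (W / W) := by ring
        _ = c a := by rw [hexp, div_self hne, mul_one, mul_one]
    · rw [← map_sum (monomial β) (fun j => μ j * d) Finset.univ,
        ← Finset.sum_mul, hμsum, one_mul]
  · intro j
    have hBsA : Bs j ⊆ A := hBs j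
    have hβBs : β ∉ Bs j := fun h => hβA (hBsA h)
    have hmomj : ∀ i, (β i : ℝ) = ∑ a ∈ Bs j, v j a * (a i : ℝ) := fun i => (hvm j i).symm
    refine ⟨⟨hva j, hβBs, ?_⟩, ?_, ?_, ?_⟩
    · exact ⟨fun a => v j a * ((μ j * W) * Real.exp (θ a)), μ j * d, v j,
        fun a ha => mul_pos (hvp j a ha)
          (mul_pos (mul_pos (hμ j) hWpos) (Real.exp_pos _)),
        ⟨hvp j, hvs j, hmomj⟩, by simp only [hg]⟩
    · have hθj : ∑ a ∈ Bs j, v j a * θ a = 0 := by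
        simp only [hθdef]
        calc ∑ a ∈ Bs j, v j a * ∑ l, ((β l : ℝ) - (a l : ℝ)) * z₀ l
            = ∑ a ∈ Bs j, ∑ l, (v j a * (β l : ℝ) * z₀ l - v j a * (a l : ℝ) * z₀ l) := by
              refine Finset.sum_congr rfl fun a _ => ?_
              rw [Finset.mul_sum]
              exact Finset.sum_congr rfl fun l _ => by ring
          _ = ∑ l, ∑ a ∈ Bs j, (v j a * (β l : ℝ) * z₀ l - v j a * (a l : ℝ) * z₀ l) :=
              Finset.sum_comm
          _ = 0 := by
              refine Finset.sum_eq_zero fun l _ => ?_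
              rw [Finset.sum_sub_distrib,
                show ∑ a ∈ Bs j, v j a * (β l : ℝ) * z₀ l
                  = ((β l : ℝ) * z₀ l) * ∑ a ∈ Bs j, v j a by
                  rw [Finset.mul_sum]; exact Finset.sum_congr rfl fun a _ => by ring,
                show ∑ a ∈ Bs j, v j a * (a l : ℝ) * z₀ l
                  = (∑ a ∈ Bs j, v j a * (a l : ℝ)) * z₀ l by
                  rw [Finset.sum_mul],
                hvs j, hvm j l]
              ring
      have hDK : |μ j * d| ≤ μ j * W := by
        rw [abs_mul, abs_of_pos (hμ j)]
        exact mul_le_mul_of_nonneg_left hdW (hμ j).le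
      have hcn := circuit_nonneg (Bs j) (fun a ha => hA a (hBsA ha)) β (v j) (hvp j)
        (hvs j) hmomj (μ j * W) (μ j * d) θ hθj hDK
      simp only [hg]
      exact hcn
    · rw [hposSupp]; exact hBsA
    · exact hβnegSupp

end
end SONC
end

section
/- Let A ⊆ ℕⁿ be a trellis (its elements being the vertices of a simplex) and let k ≥ n be a positive integer. Then the trellis kA := {k·a : a ∈ A} is an H-trellis; that is, the maximal kA-mediated set (kA)* equals Conv(kA) ∩ ℕⁿ. Equivalently, Conv(kA) ∩ ℕⁿ is itself a kA-mediated set. -/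
open MvPolynomial Finset Classical

namespace SONC

noncomputable section

/-- `M` is an `A`-mediated set: `A ⊆ M` and every point of `M` is either in `A` or an
average `(u + v)/2` of two distinct even points `u, v ∈ M`. -/
def IsMediatedSet {n : ℕ} (A : Finset (Fin n →₀ ℕ)) (M : Set (Fin n →₀ ℕ)) : Prop :=
  ↑A ⊆ M ∧ ∀ p ∈ M, p ∈ A ∨
    ∃ u ∈ M, ∃ v ∈ M, u ≠ v ∧ IsEvenPoint u ∧ IsEvenPoint v ∧ ∀ i, 2 * p i = u i + v i

/-- Choosing naturals below a bound with prescribed sum. -/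
lemma exists_sum_eq {α : Type*} (s : Finset α) (m : α → ℕ) (k : ℕ)
    (hk : k ≤ ∑ a ∈ s, m a) :
    ∃ z : α → ℕ, (∀ a ∈ s, z a ≤ m a) ∧ ∑ a ∈ s, z a = k := by
  classical
  induction k with
  | zero => exact ⟨fun _ => 0, fun a _ => Nat.zero_le _, by simp⟩
  | succ k ih =>
    obtain ⟨z, hz, hsum⟩ := ih (Nat.le_of_succ_le hk)
    have hex : ∃ a ∈ s, z a < m a := by
      by_contra h
      push_neg at h
      have := Finset.sum_le_sum h
      omega
    obtain ⟨a0, ha0, hlt⟩ := hex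
    refine ⟨Function.update z a0 (z a0 + 1), ?_, ?_⟩
    · intro a ha
      by_cases h : a = a0
      · subst h; rw [Function.update_self]; omega
      · rw [Function.update_of_ne h]; exact hz a ha
    · rw [Finset.sum_update_of_mem ha0, Finset.sdiff_singleton_eq_erase]
      have h2 := Finset.add_sum_erase s z ha0
      omega

/-- Let `A ⊆ (2ℕ)ⁿ` be a trellis (vertex set of a simplex) and `k ≥ n` a
positive integer.  Then `kA = {k·a : a ∈ A}` is an `H`-trellis: the set of all lattice
points in `Conv(kA)` is itself a `kA`-mediated set (equivalently, the maximal `kA`-mediated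
set `(kA)*` equals `Conv(kA) ∩ ℕⁿ`). -/
theorem dilated_trellis_H {n : ℕ}
    (A : Finset (Fin n →₀ ℕ)) (hA : ∀ a ∈ A, IsEvenPoint a)
    (hAff : AffineIndependent ℝ (fun a : A => toR (a : Fin n →₀ ℕ)))
    (k : ℕ) (hk : n ≤ k) (hk0 : 0 < k) :
    IsMediatedSet (A.image fun a => k • a)
      {p : Fin n →₀ ℕ |
        toR p ∈ convexHull ℝ (toR '' ((fun a => k • a) '' (A : Set (Fin n →₀ ℕ))))} := by
  classical
  have hkR : (k : ℝ) ≠ 0 := by positivity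
  have htoR_inj : Function.Injective (toR (n := n)) := by
    intro a b h
    ext i
    exact Nat.cast_injective (congrFun h i)
  have htoRsmul : ∀ a : Fin n →₀ ℕ, toR (k • a) = (k : ℝ) • toR a := by
    intro a
    funext i
    simp [toR, Finsupp.smul_apply, smul_eq_mul]
  have hsmul_inj : Function.Injective (fun a : Fin n →₀ ℕ => k • a) := by
    intro a b h
    ext i
    have h2 : k • a = k • b := h
    have h3 := congrArg (fun f : Fin n →₀ ℕ => f i) h2
    simp only [Finsupp.smul_apply, smul_eq_mul] at h3
    exact Nat.eq_of_mul_eq_mul_left hk0 h3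
  constructor
  · intro q hq
    simp only [Finset.coe_image, Set.mem_image] at hq
    obtain ⟨a, ha, rfl⟩ := hq
    exact subset_convexHull ℝ _ ⟨k • a, Set.mem_image_of_mem _ ha, rfl⟩
  · intro p hp
    by_cases hpA : p ∈ A.image (fun a => k • a)
    · exact Or.inl hpA
    right
    simp only [Set.mem_setOf_eq] at hp
    -- convert the convex hull of the image set to a Finset hull
    have hset : toR '' ((fun a => k • a) '' (A : Set (Fin n →₀ ℕ)))
        = ↑(A.image fun a => toR (k • a)) := by
      rw [Finset.coe_image, Set.image_image]
    rw [hset, Finset.mem_convexHull'] at hp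
    obtain ⟨w, hw0, hw1, hwp⟩ := hp
    have hinj : ∀ x ∈ A, ∀ y ∈ A, toR (k • x) = toR (k • y) → x = y := by
      intro x _ y _ h
      exact hsmul_inj (htoR_inj h)
    rw [Finset.sum_image hinj] at hw1
    rw [Finset.sum_image hinj] at hwp
    -- the scaled weights x
    set x : (Fin n →₀ ℕ) → ℝ := fun a => (k : ℝ) * w (toR (k • a)) with hxdef
    have hx0 : ∀ a ∈ A, 0 ≤ x a := by
      intro a ha
      have := hw0 (toR (k • a)) (Finset.mem_image_of_mem _ ha)
      positivity
    have hxsum : ∑ a ∈ A, x a = (k : ℝ) := by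
      rw [hxdef, ← Finset.mul_sum, hw1, mul_one]
    have hxp : ∑ a ∈ A, x a • toR a = toR p := by
      rw [← hwp]
      refine Finset.sum_congr rfl fun a _ => ?_
      have h6 : ∀ t : ℝ, ((k : ℝ) * t) • toR a = t • toR (k • a) := by
        intro t
        rw [htoRsmul a, smul_smul, mul_comm]
      exact h6 _
    -- A is nonempty
    have hAne : A.Nonempty := by
      rcases A.eq_empty_or_nonempty with h | h
      · rw [h] at hxsum; simp at hxsum; exact absurd hxsum.symm (by exact_mod_cast hkR)
      · exact h
    -- |A| ≤ n + 1
    have hcard : A.card ≤ n + 1 := by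
      have h1 := hAff.card_le_finrank_succ
      have h2 : Module.finrank ℝ (vectorSpan ℝ (Set.range fun a : ↥A => toR (a : Fin n →₀ ℕ)))
          ≤ n := by
        have h3 := Submodule.finrank_le
          (vectorSpan ℝ (Set.range fun a : ↥A => toR (a : Fin n →₀ ℕ)))
        rwa [Module.finrank_fin_fun] at h3
      rw [Fintype.card_coe] at h1
      omega
    -- floors
    set m : (Fin n →₀ ℕ) → ℕ := fun a => ⌊2 * x a⌋₊ with hmdef
    have hm_le : ∀ a ∈ A, (m a : ℝ) ≤ 2 * x a := by
      intro a ha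
      exact Nat.floor_le (by have := hx0 a ha; linarith)
    have hmsum : k ≤ ∑ a ∈ A, m a := by
      have hlt : (2 * k : ℝ) < ∑ a ∈ A, ((m a : ℝ) + 1) := by
        have := Finset.sum_lt_sum_of_nonempty hAne
          (f := fun a => 2 * x a) (g := fun a => (m a : ℝ) + 1)
          (fun a _ => Nat.lt_floor_add_one (2 * x a))
        calc (2 * k : ℝ) = ∑ a ∈ A, 2 * x a := by rw [← Finset.mul_sum, hxsum]
        _ < _ := this
      have hsum : ∑ a ∈ A, ((m a : ℝ) + 1) = (∑ a ∈ A, m a : ℕ) + A.card := by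
        push_cast
        rw [Finset.sum_add_distrib]
        simp
      rw [hsum] at hlt
      have : (2 * k : ℝ) < ((∑ a ∈ A, m a : ℕ) : ℝ) + (n + 1 : ℕ) := by
        have : ((A.card : ℝ)) ≤ ((n + 1 : ℕ) : ℝ) := by exact_mod_cast hcard
        linarith
    -- conclude in ℕ
      have hn : (2 * k : ℕ) < (∑ a ∈ A, m a) + (n + 1) := by exact_mod_cast this
      omega
    -- representation of toR of ℕ-combinations
    have htoRsum : ∀ z : (Fin n →₀ ℕ) → ℕ,
        toR (∑ a ∈ A, z a • a) = ∑ a ∈ A, (z a : ℝ) • toR a := by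
      intro z
      funext i
      rw [Finset.sum_apply]
      simp only [toR, Finsupp.finset_sum_apply, Finsupp.smul_apply, smul_eq_mul, Pi.smul_apply]
      push_cast
      rfl
    -- membership of combinations in the hull
    have hmem : ∀ c : (Fin n →₀ ℕ) → ℝ, (∀ a ∈ A, 0 ≤ c a) → (∑ a ∈ A, c a = (k : ℝ)) →
        ∑ a ∈ A, c a • toR a ∈
          convexHull ℝ (toR '' ((fun a => k • a) '' (A : Set (Fin n →₀ ℕ)))) := by
      intro c hc0 hcs
      have hmem0 : A.centerMass c (fun a => toR (k • a)) ∈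
          convexHull ℝ (toR '' ((fun a => k • a) '' (A : Set (Fin n →₀ ℕ)))) :=
        Finset.centerMass_mem_convexHull A hc0 (by rw [hcs]; exact_mod_cast hk0)
          (fun a ha => ⟨k • a, Set.mem_image_of_mem _ ha, rfl⟩)
      have hcm : A.centerMass c (fun a => toR (k • a)) = ∑ a ∈ A, c a • toR a := by
        rw [Finset.centerMass, hcs]
        have h5 : ∑ a ∈ A, c a • toR (k • a) = (k : ℝ) • ∑ a ∈ A, c a • toR a := by
          rw [Finset.smul_sum]
          refine Finset.sum_congr rfl fun a _ => ?_
          rw [htoRsmul, smul_comm]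
        rw [h5, smul_smul, inv_mul_cancel₀ hkR, one_smul]
      rwa [hcm] at hmem0
    -- uniqueness of the weights (affine independence)
    have huniq : ∀ y : (Fin n →₀ ℕ) → ℝ, (∑ a ∈ A, y a = (k : ℝ)) →
        (∑ a ∈ A, y a • toR a = toR p) → ∀ a ∈ A, y a = x a := by
      intro y hys hyp a ha
      have hcalc : ∀ u : (Fin n →₀ ℕ) → ℝ, (∑ a ∈ A, u a = (k : ℝ)) →
          (∑ a ∈ A, u a • toR a = toR p) →
          (Finset.univ.affineCombination ℝ (fun a : ↥A => toR (a : Fin n →₀ ℕ))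
            (fun b : ↥A => u ↑b / k)) = (k : ℝ)⁻¹ • toR p := by
        intro u hus hup
        have hsum1 : ∑ b : ↥A, u ↑b / (k : ℝ) = 1 := by
          rw [← Finset.sum_div]
          rw [Finset.sum_coe_sort A u, hus, div_self hkR]
        rw [Finset.affineCombination_eq_linear_combination _ _ _ hsum1]
        have : ∑ b : ↥A, (u ↑b / (k : ℝ)) • toR (b : Fin n →₀ ℕ)
            = (k : ℝ)⁻¹ • ∑ a ∈ A, u a • toR a := by
          rw [Finset.smul_sum, ← Finset.sum_coe_sort A (fun a => (k : ℝ)⁻¹ • (u a • toR a))]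
          refine Finset.sum_congr rfl fun b _ => ?_
          rw [smul_smul, div_eq_inv_mul]
        rw [this, hup]
      have h1 := hcalc y hys hyp
      have h2 := hcalc x hxsum hxp
      have hsum1 : ∑ b : ↥A, y ↑b / (k : ℝ) = 1 := by
        rw [← Finset.sum_div, Finset.sum_coe_sort A y, hys, div_self hkR]
      have hsum2 : ∑ b : ↥A, x ↑b / (k : ℝ) = 1 := by
        rw [← Finset.sum_div, Finset.sum_coe_sort A x, hxsum, div_self hkR]
      have heq := (affineIndependent_iff_eq_of_fintype_affineCombination_eq ℝ
        (fun a : ↥A => toR (a : Fin n →₀ ℕ))).mp hAff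
        (fun b : ↥A => y ↑b / k) (fun b : ↥A => x ↑b / k) hsum1 hsum2 (h1.trans h2.symm)
      have h7 := congrFun heq ⟨a, ha⟩
      simp only at h7
      field_simp [hkR] at h7
      exact h7
    -- the main construction
    have build : ∀ z : (Fin n →₀ ℕ) → ℕ, (∀ a ∈ A, (z a : ℝ) ≤ 2 * x a) →
        (∑ a ∈ A, z a = k) → (∑ a ∈ A, z a • a) ≠ p →
        ∃ u ∈ {p : Fin n →₀ ℕ | toR p ∈
            convexHull ℝ (toR '' ((fun a => k • a) '' (A : Set (Fin n →₀ ℕ))))},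
          ∃ v ∈ {p : Fin n →₀ ℕ | toR p ∈
            convexHull ℝ (toR '' ((fun a => k • a) '' (A : Set (Fin n →₀ ℕ))))},
          u ≠ v ∧ IsEvenPoint u ∧ IsEvenPoint v ∧ ∀ i, 2 * p i = u i + v i := by
      intro z hzle hzsum hzne
      set v : Fin n →₀ ℕ := ∑ a ∈ A, z a • a with hvdef
      have hvi : ∀ i, v i = ∑ a ∈ A, z a * a i := by
        intro i
        rw [hvdef, Finsupp.finset_sum_apply]
        refine Finset.sum_congr rfl fun a _ => ?_
        simp [Finsupp.smul_apply, smul_eq_mul]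
      have hxpi : ∀ i, (p i : ℝ) = ∑ a ∈ A, x a * (a i : ℝ) := by
        intro i
        have := congrFun hxp i
        rw [Finset.sum_apply] at this
        simp only [Pi.smul_apply, smul_eq_mul, toR] at this
        exact this.symm
      have hvle : ∀ i, v i ≤ 2 * p i := by
        intro i
        have hreal : ((v i : ℕ) : ℝ) ≤ 2 * (p i : ℝ) := by
          rw [hvi]
          push_cast
          rw [hxpi i, Finset.mul_sum]
          refine Finset.sum_le_sum fun a ha => ?_
          have h1 : (0 : ℝ) ≤ (a i : ℝ) := Nat.cast_nonneg _
          calc ((z a : ℝ)) * (a i : ℝ) ≤ (2 * x a) * (a i : ℝ) :=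
                mul_le_mul_of_nonneg_right (hzle a ha) h1
          _ = 2 * (x a * (a i : ℝ)) := by ring
        exact_mod_cast hreal
      set u : Fin n →₀ ℕ := 2 • p - v with hudef
      have hui : ∀ i, u i = 2 * p i - v i := by
        intro i
        rw [hudef, Finsupp.tsub_apply, Finsupp.smul_apply, smul_eq_mul]
      have hsum2 : ∀ i, 2 * p i = u i + v i := by
        intro i
        have h1 := hvle i
        have h2 := hui i
        omega
      have hveven : IsEvenPoint v := by
        intro i
        rw [hvi i, even_iff_two_dvd]
        refine Finset.dvd_sum fun a ha => ?_
        exact Dvd.dvd.mul_left (even_iff_two_dvd.mp (hA a ha i)) (z a)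
      have hueven : IsEvenPoint u := by
        intro i
        obtain ⟨r, hr⟩ := hveven i
        refine ⟨p i - r, ?_⟩
        have h1 := hsum2 i
        omega
      have hvmem : toR v ∈
          convexHull ℝ (toR '' ((fun a => k • a) '' (A : Set (Fin n →₀ ℕ)))) := by
        have h1 := hmem (fun a => (z a : ℝ)) (fun a _ => Nat.cast_nonneg _)
          (by exact_mod_cast hzsum)
        rw [hvdef]
        rwa [← htoRsum z] at h1
      have humem : toR u ∈
          convexHull ℝ (toR '' ((fun a => k • a) '' (A : Set (Fin n →₀ ℕ)))) := by
        have h1 := hmem (fun a => 2 * x a - (z a : ℝ))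
          (fun a ha => by linarith [hzle a ha])
          (by
            rw [Finset.sum_sub_distrib, ← Finset.mul_sum, hxsum]
            have : ∑ a ∈ A, ((z a : ℕ) : ℝ) = (k : ℝ) := by exact_mod_cast hzsum
            rw [this]; ring)
        have h2 : ∑ a ∈ A, (2 * x a - (z a : ℝ)) • toR a = toR u := by
          have h3 : ∑ a ∈ A, (2 * x a - (z a : ℝ)) • toR a
              = (2 : ℝ) • toR p - toR v := by
            rw [hvdef, htoRsum z, ← hxp, Finset.smul_sum, ← Finset.sum_sub_distrib]
            refine Finset.sum_congr rfl fun a _ => ?_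
            rw [sub_smul, mul_smul]
          rw [h3]
          funext i
          simp only [Pi.sub_apply, Pi.smul_apply, toR, smul_eq_mul]
          have h4 := hsum2 i
          have h5 := hvle i
          have : (u i : ℝ) + (v i : ℝ) = 2 * (p i : ℝ) := by exact_mod_cast h4.symm
          linarith
        rwa [h2] at h1
      have huv : u ≠ v := by
        intro h
        apply hzne
        ext i
        have h1 := hsum2 i
        have h2 : u i = v i := by rw [h]
        omega
      exact ⟨u, humem, v, hvmem, huv, hueven, hveven, hsum2⟩
    -- pick the initial z
    obtain ⟨z0, hz0le, hz0sum⟩ := exists_sum_eq A m k hmsum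
    have hz0leR : ∀ a ∈ A, ((z0 a : ℕ) : ℝ) ≤ 2 * x a := by
      intro a ha
      calc ((z0 a : ℕ) : ℝ) ≤ (m a : ℝ) := by exact_mod_cast hz0le a ha
      _ ≤ 2 * x a := hm_le a ha
    by_cases hz0p : (∑ a ∈ A, z0 a • a) = p
    · -- degenerate case: the natural choice hits p; perturb it
      have hz0x : ∀ a ∈ A, ((z0 a : ℕ) : ℝ) = x a := by
        apply huniq
        · exact_mod_cast hz0sum
        · rw [← htoRsum z0, hz0p]
      have hex1 : ∃ a1 ∈ A, 1 ≤ z0 a1 := by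
        by_contra h
        push_neg at h
        have : ∑ a ∈ A, z0 a = 0 :=
          Finset.sum_eq_zero fun a ha => by have := h a ha; omega
        omega
      obtain ⟨a1, ha1, ha1pos⟩ := hex1
      have hex2 : ∃ a2 ∈ A, a2 ≠ a1 ∧ 1 ≤ z0 a2 := by
        by_contra h
        push_neg at h
        have hz0zero : ∀ b ∈ A, b ≠ a1 → z0 b = 0 := by
          intro b hb hb1
          have := h b hb hb1
          omega
        have hsingle : ∑ a ∈ A, z0 a • a = z0 a1 • a1 :=
          Finset.sum_eq_single a1
            (fun b hb hne => by rw [hz0zero b hb hne, zero_smul])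
            (fun h' => absurd ha1 h')
        have hks : ∑ a ∈ A, z0 a = z0 a1 :=
          Finset.sum_eq_single a1
            (fun b hb hne => hz0zero b hb hne)
            (fun h' => absurd ha1 h')
        apply hpA
        rw [Finset.mem_image]
        refine ⟨a1, ha1, ?_⟩
        rw [← hz0p, hsingle]
        congr 1
        omega
      obtain ⟨a2, ha2, hne21, ha2pos⟩ := hex2
      set z1 : (Fin n →₀ ℕ) → ℕ :=
        Function.update (Function.update z0 a1 (z0 a1 + 1)) a2 (z0 a2 - 1) with hz1def
      have hz1a1 : z1 a1 = z0 a1 + 1 := by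
        rw [hz1def, Function.update_of_ne (Ne.symm hne21), Function.update_self]
      have hz1a2 : z1 a2 = z0 a2 - 1 := by
        rw [hz1def, Function.update_self]
      have hz1other : ∀ b, b ≠ a1 → b ≠ a2 → z1 b = z0 b := by
        intro b hb1 hb2
        rw [hz1def, Function.update_of_ne hb2, Function.update_of_ne hb1]
      have hz1sum : ∑ a ∈ A, z1 a = k := by
        have e1 : ∑ a ∈ A, z1 a
            = (z0 a2 - 1) + ∑ b ∈ A.erase a2, Function.update z0 a1 (z0 a1 + 1) b := by
          rw [hz1def, Finset.sum_update_of_mem ha2, Finset.sdiff_singleton_eq_erase]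
        have ha1mem : a1 ∈ A.erase a2 := Finset.mem_erase.mpr ⟨Ne.symm hne21, ha1⟩
        have e2 : ∑ b ∈ A.erase a2, Function.update z0 a1 (z0 a1 + 1) b
            = (z0 a1 + 1) + ∑ b ∈ (A.erase a2).erase a1, z0 b := by
          rw [Finset.sum_update_of_mem ha1mem, Finset.sdiff_singleton_eq_erase]
        have e3 := Finset.add_sum_erase A z0 ha2
        have e4 := Finset.add_sum_erase (A.erase a2) z0 ha1mem
        omega
      have hz1leR : ∀ a ∈ A, ((z1 a : ℕ) : ℝ) ≤ 2 * x a := by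
        intro a ha
        by_cases h1 : a = a1
        · subst h1
          rw [hz1a1, ← hz0x a ha]
          push_cast
          have : (1 : ℝ) ≤ (z0 a : ℝ) := by exact_mod_cast ha1pos
          linarith
        · by_cases h2 : a = a2
          · subst h2
            rw [hz1a2, ← hz0x a ha]
            have h3 : (z0 a - 1 : ℕ) ≤ z0 a := Nat.sub_le _ _
            have h4 : ((z0 a - 1 : ℕ) : ℝ) ≤ (z0 a : ℝ) := by exact_mod_cast h3
            have h5 : (0 : ℝ) ≤ (z0 a : ℝ) := Nat.cast_nonneg _
            linarith
          · rw [hz1other a h1 h2]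
            exact hz0leR a ha
      apply build z1 hz1leR hz1sum
      -- the perturbed combination is not p
      intro hcon
      have hz1x : ∀ a ∈ A, ((z1 a : ℕ) : ℝ) = x a := by
        apply huniq
        · exact_mod_cast hz1sum
        · rw [← htoRsum z1, hcon]
      have e1 := hz1x a1 ha1
      have e2 := hz0x a1 ha1
      rw [hz1a1] at e1
      rw [← e2] at e1
      have : (z0 a1 + 1 : ℕ) = z0 a1 := by exact_mod_cast e1
      omega
    · exact build z0 hz0leR hz0sum hz0p

end
end SONC
end

section
/- Let f(x₁,…,xₙ) ∈ ℝ[x₁,…,xₙ] and let k be an odd positive integer. Then f(x₁,…,xₙ) is a sum of nonnegative circuit polynomials with the same support if and only if f(x₁^k,…,xₙ^k) is a sum of nonnegative circuit polynomials with the same support. -/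
open MvPolynomial Finset Classical

namespace SONC

noncomputable section

section Aux

variable {n k : ℕ}

lemma smul_inj (hk0 : 0 < k) : Function.Injective (fun a : Fin n →₀ ℕ => k • a) := by
  intro a b h
  ext i
  have := DFunLike.congr_fun h i
  simp only [Finsupp.smul_apply, smul_eq_mul] at this
  exact Nat.eq_of_mul_eq_mul_left hk0 this

lemma phi_monomial (hk0 : 0 < k) (a : Fin n →₀ ℕ) (c : ℝ) :
    (aeval fun i => (X i : MvPolynomial (Fin n) ℝ) ^ k) (monomial a c) = monomial (k • a) c := by
  rw [aeval_monomial, monomial_eq]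
  have hsupp : (k • a).support = a.support := by
    ext i
    simp [Finsupp.mem_support_iff, Finsupp.smul_apply, Nat.mul_eq_zero, hk0.ne']
  rw [algebraMap_eq, Finsupp.prod, Finsupp.prod, hsupp]
  congr 1
  apply Finset.prod_congr rfl
  intro i _
  rw [← pow_mul, Finsupp.smul_apply, smul_eq_mul]

lemma phi_eq_sum (hk0 : 0 < k) (f : MvPolynomial (Fin n) ℝ) :
    (aeval fun i => (X i : MvPolynomial (Fin n) ℝ) ^ k) f
      = ∑ a ∈ f.support, monomial (k • a) (coeff a f) := by
  conv_lhs => rw [f.as_sum]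
  rw [map_sum]
  exact Finset.sum_congr rfl fun a _ => phi_monomial hk0 a _

lemma coeff_phi_smul (hk0 : 0 < k) (f : MvPolynomial (Fin n) ℝ) (a : Fin n →₀ ℕ) :
    coeff (k • a) ((aeval fun i => (X i : MvPolynomial (Fin n) ℝ) ^ k) f) = coeff a f := by
  classical
  rw [phi_eq_sum hk0, coeff_sum]
  simp only [coeff_monomial]
  rw [Finset.sum_congr rfl (fun a' _ => if_congr
    ⟨fun h => smul_inj hk0 h, fun h => by rw [h]⟩ rfl rfl)]
  rw [Finset.sum_ite_eq' f.support a (fun a' => coeff a' f)]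
  by_cases h : a ∈ f.support
  · rw [if_pos h]
  · rw [if_neg h, (notMem_support_iff.mp h)]

lemma coeff_phi_of_not (hk0 : 0 < k) (f : MvPolynomial (Fin n) ℝ) {b : Fin n →₀ ℕ}
    (hb : b ∉ f.support.image (fun a => k • a)) :
    coeff b ((aeval fun i => (X i : MvPolynomial (Fin n) ℝ) ^ k) f) = 0 := by
  classical
  rw [phi_eq_sum hk0, coeff_sum]
  apply Finset.sum_eq_zero
  intro a ha
  rw [coeff_monomial, if_neg]
  intro h
  exact hb (Finset.mem_image.mpr ⟨a, ha, h⟩)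

lemma support_phi (hk0 : 0 < k) (f : MvPolynomial (Fin n) ℝ) :
    ((aeval fun i => (X i : MvPolynomial (Fin n) ℝ) ^ k) f).support
      = f.support.image (fun a => k • a) := by
  classical
  ext b
  simp only [mem_support_iff]
  constructor
  · intro h
    by_contra hb
    exact h (coeff_phi_of_not hk0 f hb)
  · intro hb
    obtain ⟨a, ha, rfl⟩ := Finset.mem_image.mp hb
    rw [coeff_phi_smul hk0]
    exact mem_support_iff.mp ha

lemma phi_inj (hk0 : 0 < k) :
    Function.Injective (fun f : MvPolynomial (Fin n) ℝ =>
      (aeval fun i => (X i : MvPolynomial (Fin n) ℝ) ^ k) f) := by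
  intro f g h
  ext a
  have h' : (aeval fun i => (X i : MvPolynomial (Fin n) ℝ) ^ k) f
      = (aeval fun i => (X i : MvPolynomial (Fin n) ℝ) ^ k) g := h
  rw [← coeff_phi_smul hk0 f a, ← coeff_phi_smul hk0 g a, h']

lemma eval_phi (x : Fin n → ℝ) (f : MvPolynomial (Fin n) ℝ) :
    eval x ((aeval fun i => (X i : MvPolynomial (Fin n) ℝ) ^ k) f)
      = eval (fun i => x i ^ k) f := by
  induction f using MvPolynomial.induction_on with
  | C c => simp [aeval_C, algebraMap_eq]
  | add p q hp hq => rw [map_add, map_add, hp, hq, eval_add]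
  | mul_X p i hp => rw [map_mul, map_mul, aeval_X, hp, eval_mul, eval_X, eval_pow, eval_X]

lemma odd_pow_surj (hk : Odd k) (hk0 : 0 < k) (y : ℝ) : ∃ x : ℝ, x ^ k = y := by
  rcases le_or_gt 0 y with hy | hy
  · refine ⟨y ^ ((k : ℝ)⁻¹), ?_⟩
    rw [← Real.rpow_natCast (y ^ ((k:ℝ)⁻¹)) k, ← Real.rpow_mul hy,
      inv_mul_cancel₀ (by exact_mod_cast hk0.ne'), Real.rpow_one]
  · obtain ⟨x, hx⟩ : ∃ x : ℝ, x ^ k = -y := by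
      refine ⟨(-y) ^ ((k : ℝ)⁻¹), ?_⟩
      rw [← Real.rpow_natCast ((-y) ^ ((k:ℝ)⁻¹)) k, ← Real.rpow_mul (by linarith),
        inv_mul_cancel₀ (by exact_mod_cast hk0.ne'), Real.rpow_one]
    exact ⟨-x, by rw [Odd.neg_pow hk, hx, neg_neg]⟩

lemma toR_smul (a : Fin n →₀ ℕ) : toR (k • a) = (k : ℝ) • toR a := by
  funext i
  simp only [toR, Finsupp.smul_apply, smul_eq_mul, Pi.smul_apply]
  push_cast
  ring

lemma affInd_iff (hk0 : 0 < k) (A : Finset (Fin n →₀ ℕ)) :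
    AffineIndependent ℝ (fun a : A => toR (a : Fin n →₀ ℕ)) ↔
    AffineIndependent ℝ
      (fun b : (A.image (fun a => k • a)) => toR (b : Fin n →₀ ℕ)) := by
  classical
  have hsurj : ∀ b : (A.image (fun a => k • a)),
      ∃ a : A, k • (a : Fin n →₀ ℕ) = (b : Fin n →₀ ℕ) := by
    rintro ⟨b, hb⟩
    obtain ⟨a, ha, rfl⟩ := Finset.mem_image.mp hb
    exact ⟨⟨a, ha⟩, rfl⟩
  let e : A ≃ (A.image (fun a => k • a)) :=
    Equiv.ofBijective (fun a => ⟨k • (a : Fin n →₀ ℕ), Finset.mem_image_of_mem _ a.2⟩)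
      ⟨fun a b h => Subtype.ext (smul_inj hk0 (congrArg Subtype.val h)),
       fun b => by obtain ⟨a, ha⟩ := hsurj b; exact ⟨a, Subtype.ext ha⟩⟩
  let L : (Fin n → ℝ) →ₗ[ℝ] (Fin n → ℝ) := (k : ℝ) • LinearMap.id
  have hL : Function.Injective L.toAffineMap := by
    intro x y h
    have : (k : ℝ) • x = (k : ℝ) • y := h
    exact smul_right_injective (Fin n → ℝ) (by exact_mod_cast hk0.ne') this
  have key : (fun b : (A.image (fun a => k • a)) => toR (b : Fin n →₀ ℕ)) ∘ e
      = L.toAffineMap ∘ (fun a : A => toR (a : Fin n →₀ ℕ)) := by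
    funext a
    show toR (k • (a : Fin n →₀ ℕ)) = _
    simp only [Function.comp_apply, LinearMap.coe_toAffineMap, toR_smul]
    rfl
  constructor
  · intro h
    rw [← affineIndependent_equiv e, key]
    exact h.map' _ hL
  · intro h
    have h2 := (affineIndependent_equiv e).mpr h
    rw [key] at h2
    exact AffineIndependent.of_comp L.toAffineMap h2

def unscale {n : ℕ} (k : ℕ) (b : Fin n →₀ ℕ) : Fin n →₀ ℕ :=
  b.mapRange (· / k) (Nat.zero_div k)

lemma unscale_smul {n k : ℕ} (hk0 : 0 < k) (a : Fin n →₀ ℕ) : unscale k (k • a) = a := by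
  ext i
  simp [unscale, Finsupp.mapRange_apply, Finsupp.smul_apply, Nat.mul_div_cancel_left _ hk0]

lemma evenPoint_smul_iff {n k : ℕ} (hk : Odd k) (a : Fin n →₀ ℕ) :
    IsEvenPoint (k • a) ↔ IsEvenPoint a := by
  have hke : ¬ Even k := Nat.not_even_iff_odd.mpr hk
  constructor <;> intro h i <;> have := h i <;>
    simp only [Finsupp.smul_apply, smul_eq_mul, Nat.even_mul] at * <;> tauto

lemma posSupp_phi {n k : ℕ} (hk : Odd k) (hk0 : 0 < k) (f : MvPolynomial (Fin n) ℝ) :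
    posSupp ((aeval fun i => (X i : MvPolynomial (Fin n) ℝ) ^ k) f)
      = (posSupp f).image (fun a => k • a) := by
  classical
  ext b
  simp only [posSupp, Finset.mem_filter, Finset.mem_image]
  constructor
  · rintro ⟨hb, hev, hpos⟩
    rw [support_phi hk0] at hb
    obtain ⟨a, ha, rfl⟩ := Finset.mem_image.mp hb
    rw [coeff_phi_smul hk0] at hpos
    exact ⟨a, ⟨ha, (evenPoint_smul_iff hk a).mp hev, hpos⟩, rfl⟩
  · rintro ⟨a, ha, rfl⟩
    obtain ⟨ha1, ha2, ha3⟩ := ha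
    refine ⟨?_, (evenPoint_smul_iff hk a).mpr ha2, ?_⟩
    · rw [support_phi hk0]; exact Finset.mem_image_of_mem _ ha1
    · rwa [coeff_phi_smul hk0]

lemma negSupp_phi {n k : ℕ} (hk : Odd k) (hk0 : 0 < k) (f : MvPolynomial (Fin n) ℝ) :
    negSupp ((aeval fun i => (X i : MvPolynomial (Fin n) ℝ) ^ k) f)
      = (negSupp f).image (fun a => k • a) := by
  classical
  rw [negSupp, negSupp, support_phi hk0, posSupp_phi hk hk0,
    Finset.image_sdiff _ _ (smul_inj hk0)]

lemma nonneg_phi_iff {n k : ℕ} (hk : Odd k) (hk0 : 0 < k) (f : MvPolynomial (Fin n) ℝ) :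
    IsNonneg f ↔ IsNonneg ((aeval fun i => (X i : MvPolynomial (Fin n) ℝ) ^ k) f) := by
  constructor
  · intro h x
    rw [eval_phi]
    exact h _
  · intro h x
    choose y hy using fun i => odd_pow_surj hk hk0 (x i)
    have hx : x = fun i => y i ^ k := funext fun i => (hy i).symm
    rw [hx]
    have := h y
    rwa [eval_phi] at this

lemma circuit_phi_iff {n k : ℕ} (hk0 : 0 < k) (A : Finset (Fin n →₀ ℕ))
    (β : Fin n →₀ ℕ) (g : MvPolynomial (Fin n) ℝ) :
    IsCircuitOn A β g ↔
      IsCircuitOn (A.image (fun a => k • a)) (k • β)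
        ((aeval fun i => (X i : MvPolynomial (Fin n) ℝ) ^ k) g) := by
  classical
  have hkR : (k : ℝ) ≠ 0 := by exact_mod_cast hk0.ne'
  have hinj : ∀ x ∈ A, ∀ y ∈ A, k • x = k • y → x = y := fun x _ y _ h => smul_inj hk0 h
  constructor
  · rintro ⟨haff, hβ, c, d, lam, hc, ⟨hlam0, hlam1, hlamβ⟩, hg⟩
    refine ⟨(affInd_iff hk0 A).mp haff, ?_, c ∘ unscale k, d, lam ∘ unscale k, ?_, ⟨?_, ?_, ?_⟩, ?_⟩
    · intro hmem
      obtain ⟨a, ha, hab⟩ := Finset.mem_image.mp hmem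
      rw [smul_inj hk0 hab] at ha
      exact hβ ha
    · intro b hb
      obtain ⟨a, ha, rfl⟩ := Finset.mem_image.mp hb
      simpa [unscale_smul hk0] using hc a ha
    · intro b hb
      obtain ⟨a, ha, rfl⟩ := Finset.mem_image.mp hb
      simpa [unscale_smul hk0] using hlam0 a ha
    · rw [Finset.sum_image hinj]
      rw [← hlam1]
      exact Finset.sum_congr rfl fun a ha => by rw [Function.comp_apply, unscale_smul hk0]
    · intro i
      rw [Finset.sum_image hinj]
      have : ((k • β) i : ℝ) = (k : ℝ) * (β i : ℝ) := by
        simp [Finsupp.smul_apply]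
      rw [this, hlamβ i, Finset.mul_sum]
      refine Finset.sum_congr rfl fun a ha => ?_
      rw [Function.comp_apply, unscale_smul hk0]
      have : (((k • a) i : ℕ) : ℝ) = (k : ℝ) * (a i : ℝ) := by
        simp [Finsupp.smul_apply]
      rw [this]
      ring
    · rw [hg, map_sub, map_sum, phi_monomial hk0, Finset.sum_image hinj]
      congr 1
      exact Finset.sum_congr rfl fun a ha => by
        rw [phi_monomial hk0, Function.comp_apply, unscale_smul hk0]
  · rintro ⟨haff, hβ, c, d, lam, hc, ⟨hlam0, hlam1, hlamβ⟩, hg⟩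
    refine ⟨(affInd_iff hk0 A).mpr haff, ?_, c ∘ (fun a => k • a), d,
      lam ∘ (fun a => k • a), ?_, ⟨?_, ?_, ?_⟩, ?_⟩
    · intro hmem
      exact hβ (Finset.mem_image_of_mem _ hmem)
    · intro a ha
      exact hc _ (Finset.mem_image_of_mem _ ha)
    · intro a ha
      exact hlam0 _ (Finset.mem_image_of_mem _ ha)
    · rw [← hlam1, Finset.sum_image hinj]
      rfl
    · intro i
      have hβk := hlamβ i
      rw [Finset.sum_image hinj] at hβk
      have h1 : ((k • β) i : ℝ) = (k : ℝ) * (β i : ℝ) := by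
        simp [Finsupp.smul_apply]
      rw [h1] at hβk
      apply mul_left_cancel₀ hkR
      rw [hβk, Finset.mul_sum]
      refine Finset.sum_congr rfl fun a ha => ?_
      have h2 : (((k • a) i : ℕ) : ℝ) = (k : ℝ) * (a i : ℝ) := by
        simp [Finsupp.smul_apply]
      rw [h2]
      simp only [Function.comp_apply]
      ring
    · have hφ : (aeval fun i => (X i : MvPolynomial (Fin n) ℝ) ^ k)
          ((∑ a ∈ A, monomial a ((c ∘ fun a => k • a) a)) - monomial β d)
          = (∑ b ∈ A.image (fun a => k • a), monomial b (c b)) - monomial (k • β) d := by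
        rw [map_sub, map_sum, phi_monomial hk0, Finset.sum_image hinj]
        congr 1
        exact Finset.sum_congr rfl fun a ha => by rw [phi_monomial hk0]; rfl
      apply phi_inj (n := n) hk0
      show (aeval fun i => (X i : MvPolynomial (Fin n) ℝ) ^ k) g
        = (aeval fun i => (X i : MvPolynomial (Fin n) ℝ) ^ k)
          ((∑ a ∈ A, monomial a ((c ∘ fun a => k • a) a)) - monomial β d)
      rw [hg, hφ]

end Aux

/-- For an odd positive integer `k`, `f(x₁, …, xₙ)` is a sum of
nonnegative circuit polynomials with the same support iff `f(x₁^k, …, xₙ^k)` is. -/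
theorem sameSupport_iff_odd_power_substitution {n : ℕ}
    (f : MvPolynomial (Fin n) ℝ) (k : ℕ) (hk : Odd k) (hk0 : 0 < k) :
    SONCSameSupport f ↔
      SONCSameSupport ((aeval fun i => (X i : MvPolynomial (Fin n) ℝ) ^ k) f) := by
  classical
  constructor
  · rintro ⟨m, g, A, β, hsum, hall⟩
    refine ⟨m, fun i => (aeval fun i => (X i : MvPolynomial (Fin n) ℝ) ^ k) (g i),
      fun i => (A i).image (fun a => k • a), fun i => k • β i, ?_, ?_⟩
    · rw [hsum, map_sum]
    · intro i
      obtain ⟨h1, h2, h3, h4⟩ := hall i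
      refine ⟨(circuit_phi_iff hk0 _ _ _).mp h1, (nonneg_phi_iff hk hk0 _).mp h2, ?_, ?_⟩
      · rw [posSupp_phi hk hk0]
        exact Finset.image_subset_image h3
      · rw [negSupp_phi hk hk0]
        exact Finset.mem_image_of_mem _ h4
  · rintro ⟨m, g, A, β, hsum, hall⟩
    have hA : ∀ i, ∀ b ∈ A i, k • unscale k b = b := by
      intro i b hb
      have h3 := (hall i).2.2.1 hb
      rw [posSupp_phi hk hk0] at h3
      obtain ⟨a, _, rfl⟩ := Finset.mem_image.mp h3
      rw [unscale_smul hk0]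
    have hB : ∀ i, k • unscale k (β i) = β i := by
      intro i
      have h4 := (hall i).2.2.2
      rw [negSupp_phi hk hk0] at h4
      obtain ⟨a, _, h⟩ := Finset.mem_image.mp h4
      rw [← h, unscale_smul hk0]
    have key : ∀ i, ∃ h : MvPolynomial (Fin n) ℝ,
        (aeval fun i => (X i : MvPolynomial (Fin n) ℝ) ^ k) h = g i := by
      intro i
      obtain ⟨⟨haff, hβ, c, d, lam, hc, hint, hg⟩, h2, h3, h4⟩ := hall i
      refine ⟨(∑ b ∈ A i, monomial (unscale k b) (c b)) - monomial (unscale k (β i)) d, ?_⟩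
      rw [map_sub, map_sum, phi_monomial hk0, hB i, hg]
      congr 1
      exact Finset.sum_congr rfl fun b hb => by rw [phi_monomial hk0, hA i b hb]
    choose h hh using key
    have hAimg : ∀ i, ((A i).image (unscale k)).image (fun a => k • a) = A i := by
      intro i
      rw [Finset.image_image]
      exact (Finset.image_congr (g := id) fun b hb => hA i b hb).trans Finset.image_id
    refine ⟨m, h, fun i => (A i).image (unscale k), fun i => unscale k (β i), ?_, ?_⟩
    · apply phi_inj (n := n) hk0
      show (aeval fun i => (X i : MvPolynomial (Fin n) ℝ) ^ k) f
        = (aeval fun i => (X i : MvPolynomial (Fin n) ℝ) ^ k) (∑ i, h i)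
      rw [map_sum, hsum]
      exact Finset.sum_congr rfl fun i _ => (hh i).symm
    · intro i
      obtain ⟨h1, h2, h3, h4⟩ := hall i
      refine ⟨?_, ?_, ?_, ?_⟩
      · apply (circuit_phi_iff hk0 _ _ _).mpr
        rw [hAimg i, hB i, hh i]
        exact h1
      · apply (nonneg_phi_iff hk hk0 _).mpr
        rw [hh i]
        exact h2
      · intro b hb
        obtain ⟨a, ha, rfl⟩ := Finset.mem_image.mp hb
        have := h3 ha
        rw [posSupp_phi hk hk0] at this
        obtain ⟨a0, ha0, rfl⟩ := Finset.mem_image.mp this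
        rwa [unscale_smul hk0]
      · have := h4
        rw [negSupp_phi hk hk0] at this
        obtain ⟨a0, ha0, hh0⟩ := Finset.mem_image.mp this
        show unscale k (β i) ∈ negSupp f
        rw [← hh0, unscale_smul hk0]
        exact ha0

end
end SONC
end
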